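/- arXiv:1802.07336 — 8 statements merged into one kernel-verified Lean document; each statement's English description precedes it below -/
import Mathlib

section
/- Let m > n ≥ 1 be positive integers. The absolute value of the resultant of the cyclotomic polynomials Φ_n and Φ_m equals p^{φ(n)} if m = n·p^α for some prime p and integer α ≥ 1, and equals 1 otherwise. -/
open Polynomial Finset

set_option linter.unreachableTactic false
set_option linter.unusedTactic false


-- fiber counting for surjective group homs
lemma prod_comp_surj {G H : Type*} [Group G] [Group H] [Fintype G] [Fintype H]
    (f : G →* H) (hf : Function.Surjective f) (F : H → ℝ) :
    ∏ g : G, F (f g) = (∏ h : H, F h) ^ (Fintype.card G / Fintype.card H) := by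
  classical
  have hfib : ∀ h : H, (univ.filter (fun g : G => f g = h)).card
      = (univ.filter (fun g : G => f g = 1)).card := by
    intro h
    obtain ⟨a, ha⟩ := hf h
    apply Finset.card_nbij (fun g => a⁻¹ * g)
    · intro g hg
      simp only [mem_filter, mem_univ, true_and, Finset.coe_filter, Set.mem_setOf_eq] at hg ⊢
      simp [map_mul, hg, ha]
    · intro g₁ h₁ g₂ h₂ hee
      simpa using hee
    · intro g hg
      simp only [Set.mem_image, Finset.coe_filter, Set.mem_setOf_eq] at hg ⊢
      refine ⟨a * g, ?_, by group⟩
      simp only [mem_univ, true_and] at hg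
      simp [map_mul, hg, ha]
  set K := (univ.filter (fun g : G => f g = 1)).card with hK
  have hcardG : Fintype.card G = Fintype.card H * K := by
    rw [← Finset.card_univ, Finset.card_eq_sum_card_fiberwise
      (f := f) (t := univ) (fun _ _ => mem_univ _)]
    rw [Finset.sum_congr rfl (fun h _ => hfib h)]
    simp [mul_comm, Finset.card_univ]
  have hKval : Fintype.card G / Fintype.card H = K := by
    rw [hcardG, Nat.mul_div_cancel_left _ Fintype.card_pos]
  rw [hKval]
  rw [← Finset.prod_fiberwise' (univ : Finset G) f F]
  rw [← Finset.prod_pow]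
  exact Finset.prod_congr rfl fun h _ => by rw [Finset.prod_const, hfib h]

lemma prod_primRoots_eq {m : ℕ} [NeZero m] {ζ : ℂ} (hζ : IsPrimitiveRoot ζ m) (f : ℂ → ℝ) :
    ∏ ξ ∈ primitiveRoots m ℂ, f ξ = ∏ u : (ZMod m)ˣ, f (ζ ^ (u : ZMod m).val) := by
  have hm : 0 < m := NeZero.pos m
  rw [← Finset.prod_coe_sort (primitiveRoots m ℂ) f]
  symm
  apply Fintype.prod_bijective (fun u : (ZMod m)ˣ =>
    (⟨ζ ^ (u : ZMod m).val, by
      rw [mem_primitiveRoots hm]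
      exact hζ.pow_of_coprime _ (ZMod.val_coe_unit_coprime u)⟩ :
      {x // x ∈ primitiveRoots m ℂ}))
  · constructor
    · intro u v huv
      simp only [Subtype.mk_eq_mk] at huv
      have := hζ.pow_inj (ZMod.val_lt _) (ZMod.val_lt _) huv
      exact Units.ext (ZMod.val_injective m this)
    · rintro ⟨ξ, hξ⟩
      rw [mem_primitiveRoots hm, hζ.isPrimitiveRoot_iff] at hξ
      obtain ⟨i, hi, hco, rfl⟩ := hξ
      refine ⟨ZMod.unitOfCoprime i hco, ?_⟩
      simp only [Subtype.mk_eq_mk, ZMod.coe_unitOfCoprime, ZMod.val_natCast,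
        Nat.mod_eq_of_lt hi]
  · intro u; rfl

noncomputable def T (m n : ℕ) : ℕ :=
  if n ∣ m ∧ IsPrimePow (m / n) then (m / n).minFac ^ n.totient else 1

lemma T_pos (m n : ℕ) : 0 < T m n := by
  rw [T]
  split_ifs with h
  · exact Nat.pow_pos (Nat.minFac_pos _)
  · exact Nat.one_pos

lemma NT (m n : ℕ) (hn : 0 < n) (hnm : n < m) :
    ∏ d ∈ n.divisors, T m d
      = if IsPrimePow (m / Nat.gcd m n)
        then (m / Nat.gcd m n).minFac ^ (m.totient / (m / Nat.gcd m n).totient) else 1 := by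
  have hm : 0 < m := hn.trans hnm
  set g := Nat.gcd m n with hgdef
  set M := m / g with hMdef
  have hg0 : 0 < g := Nat.gcd_pos_of_pos_right _ hn
  have hgm : g ∣ m := Nat.gcd_dvd_left m n
  have hgn : g ∣ n := Nat.gcd_dvd_right m n
  have hMm : m = g * M := (Nat.div_mul_cancel hgm).symm.trans (mul_comm _ _)
  have hM1 : 1 < M := by
    have hgle : g ≤ n := Nat.le_of_dvd hn hgn
    have hne : M ≠ 1 := fun h => by rw [h, mul_one] at hMm; omega
    have hM0 : 0 < M := Nat.div_pos (Nat.le_of_dvd hm hgm) hg0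
    omega
  -- reduce to divisors of g
  have hstep1 : ∏ d ∈ n.divisors, T m d = ∏ d ∈ g.divisors, T m d := by
    symm
    apply Finset.prod_subset (Nat.divisors_subset_of_dvd hn.ne' hgn)
    intro d hd hdg
    rw [Nat.mem_divisors] at hd hdg
    rw [T, if_neg]
    rintro ⟨hdm, -⟩
    exact hdg ⟨Nat.dvd_gcd hdm hd.1, hg0.ne'⟩
  rw [hstep1]
  -- the divisibility M ∣ m / d for d ∣ g
  have hMdiv : ∀ d : ℕ, d ∣ g → M ∣ m / d := by
    intro d hdg
    obtain ⟨e, he⟩ := hdg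
    have hd0 : 0 < d := Nat.pos_of_dvd_of_pos ⟨e, he⟩ hg0
    have : m / d = e * M := by
      rw [hMm, he, mul_assoc, Nat.mul_div_cancel_left _ hd0]
    rw [this]
    exact dvd_mul_left M e
  by_cases hpp : IsPrimePow M
  · rw [if_pos hpp]
    obtain ⟨p, k, hp0, hk, hpk⟩ := hpp
    have hp : p.Prime := hp0.nat_prime
    set f := g.factorization p with hfdef
    set m₀ := g / p ^ f with hm₀def
    have hpf : p ^ f ∣ g := Nat.ordProj_dvd g p
    have hgsplit : g = m₀ * p ^ f := (Nat.div_mul_cancel hpf).symm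
    have hm₀0 : 0 < m₀ := Nat.div_pos (Nat.le_of_dvd hg0 hpf) (pow_pos hp.pos _)
    have hpm₀ : ¬ p ∣ m₀ := Nat.not_dvd_ordCompl hp hg0.ne'
    have hmsplit : m = m₀ * p ^ (f + k) := by
      rw [hMm, hgsplit, ← hpk, pow_add, mul_assoc]
    have hcop : m₀.Coprime (p ^ (f + k)) :=
      (((Nat.Prime.coprime_iff_not_dvd hp).mpr hpm₀).symm).pow_right _
    -- the filter set
    have hset : g.divisors.filter (fun d => d ∣ m ∧ IsPrimePow (m / d))
        = (p ^ f).divisors.image (fun t => m₀ * t) := by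
      ext d
      simp only [Finset.mem_filter, Finset.mem_image, Nat.mem_divisors]
      constructor
      · rintro ⟨⟨hdg, -⟩, hdm, q, s, hq0, hs, hqs⟩
        have hq : q.Prime := hq0.nat_prime
        have hMmd : M ∣ m / d := hMdiv d hdg
        have hpq : p = q := by
          have hpM : p ∣ M := by rw [← hpk]; exact dvd_pow_self p hk.ne'
          have : p ∣ q ^ s := by rw [hqs]; exact hpM.trans hMmd
          exact (Nat.prime_dvd_prime_iff_eq hp hq).mp (hp.dvd_of_dvd_pow this)
        subst hpq
        have hsk : k ≤ s := by
          have : p ^ k ∣ p ^ s := by rw [hpk, hqs]; exact hMmd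
          exact (Nat.pow_dvd_pow_iff_le_right hp.one_lt).mp this
        have hdps : d * p ^ s = m := by
          rw [hqs]; exact Nat.mul_div_cancel' hdm
        have hsfk : s ≤ f + k := by
          have hps : p ^ s ∣ m := ⟨d, by rw [← hdps]; ring⟩
          rw [hmsplit] at hps
          have hcop2 : (p ^ s).Coprime m₀ :=
            ((Nat.Prime.coprime_iff_not_dvd hp).mpr hpm₀).pow_left _
          have := Nat.Coprime.dvd_of_dvd_mul_left hcop2 (by rwa [mul_comm] at hps)
          exact (Nat.pow_dvd_pow_iff_le_right hp.one_lt).mp this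
        refine ⟨p ^ (f + k - s), ⟨pow_dvd_pow p (by omega), (pow_pos hp.pos f).ne'⟩, ?_⟩
        have : (m₀ * p ^ (f + k - s)) * p ^ s = d * p ^ s := by
          rw [hdps, hmsplit, mul_assoc, ← pow_add]
          congr 2
          omega
        exact Nat.eq_of_mul_eq_mul_right (pow_pos hp.pos s) this
      · rintro ⟨t, ⟨htdvd, -⟩, rfl⟩
        obtain ⟨j, hjf, rfl⟩ := (Nat.dvd_prime_pow hp).mp htdvd
        have hdm : m₀ * p ^ j ∣ m := by
          rw [hmsplit]
          exact mul_dvd_mul_left m₀ (pow_dvd_pow p (by omega))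
        have hmd : m / (m₀ * p ^ j) = p ^ (f + k - j) := by
          have hmeq : m = (m₀ * p ^ j) * p ^ (f + k - j) := by
            rw [hmsplit, mul_assoc, ← pow_add]
            congr 2
            omega
          rw [hmeq, Nat.mul_div_cancel_left _ (Nat.mul_pos hm₀0 (pow_pos hp.pos _))]
        refine ⟨⟨?_, hg0.ne'⟩, hdm, ?_⟩
        · rw [hgsplit]; exact mul_dvd_mul_left m₀ (pow_dvd_pow p hjf)
        · rw [hmd]; exact ⟨p, f + k - j, hp.prime, by omega, rfl⟩
    -- compute the product
    have hprod : ∏ d ∈ g.divisors, T m d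
        = ∏ d ∈ g.divisors.filter (fun d => d ∣ m ∧ IsPrimePow (m / d)),
            (m / d).minFac ^ d.totient := by
      rw [Finset.prod_filter]
      exact Finset.prod_congr rfl fun d _ => rfl
    rw [hprod, hset, Finset.prod_image (fun a _ b _ h =>
      Nat.eq_of_mul_eq_mul_left hm₀0 h)]
    have hterm : ∀ t ∈ (p ^ f).divisors,
        (m / (m₀ * t)).minFac ^ (m₀ * t).totient = p ^ (m₀.totient * t.totient) := by
      intro t ht
      rw [Nat.mem_divisors] at ht
      obtain ⟨j, hjf, rfl⟩ := (Nat.dvd_prime_pow hp).mp ht.1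
      have hmd : m / (m₀ * p ^ j) = p ^ (f + k - j) := by
        have hmeq : m = (m₀ * p ^ j) * p ^ (f + k - j) := by
          rw [hmsplit, mul_assoc, ← pow_add]
          congr 2
          omega
        rw [hmeq, Nat.mul_div_cancel_left _ (Nat.mul_pos hm₀0 (pow_pos hp.pos _))]
      rw [hmd, Nat.Prime.pow_minFac hp (by omega)]
      congr 1
      rw [Nat.totient_mul ((((Nat.Prime.coprime_iff_not_dvd hp).mpr hpm₀).symm).pow_right _)]
    rw [Finset.prod_congr rfl hterm, Finset.prod_pow_eq_pow_sum]
    have hsum : ∑ t ∈ (p ^ f).divisors, m₀.totient * t.totient = m₀.totient * p ^ f := by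
      rw [← Finset.mul_sum, Nat.sum_totient]
    rw [hsum]
    -- now the exponent on the RHS
    have hminM : M.minFac = p := by rw [← hpk, Nat.Prime.pow_minFac hp hk.ne']
    have hexp : m.totient / M.totient = m₀.totient * p ^ f := by
      have htm : m.totient = (m₀.totient * p ^ f) * M.totient := by
        rw [hmsplit, Nat.totient_mul hcop, ← hpk]
        rw [Nat.totient_prime_pow hp (by omega), Nat.totient_prime_pow hp hk]
        rw [show f + k - 1 = f + (k - 1) by omega, pow_add]
        ring
      rw [htm, Nat.mul_div_cancel _ (Nat.totient_pos.mpr (by omega))]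
    rw [hminM, hexp]
  · rw [if_neg hpp]
    apply Finset.prod_eq_one
    intro d hd
    rw [Nat.mem_divisors] at hd
    rw [T, if_neg]
    rintro ⟨hdm, q, s, hq0, hs, hqs⟩
    have hq : q.Prime := hq0.nat_prime
    have hMmd : M ∣ m / d := hMdiv d hd.1
    rw [← hqs] at hMmd
    obtain ⟨j, hjs, hMj⟩ := (Nat.dvd_prime_pow hq).mp hMmd
    have hj1 : 1 ≤ j := by
      rcases Nat.eq_zero_or_pos j with rfl | h
      · simp at hMj; omega
      · exact h
    exact hpp ⟨q, j, hq.prime, hj1, hMj.symm⟩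
lemma Qval (m n : ℕ) (hn : 0 < n) (hnm : n < m) :
    ∏ ζ ∈ primitiveRoots m ℂ, ‖ζ ^ n - 1‖
      = (∏ ξ ∈ primitiveRoots (m / Nat.gcd m n) ℂ, ‖ξ - 1‖)
        ^ (Nat.totient m / Nat.totient (m / Nat.gcd m n)) := by
  have hm : 0 < m := hn.trans hnm
  set g := Nat.gcd m n with hgdef
  set M := m / g with hMdef
  have hg0 : 0 < g := Nat.gcd_pos_of_pos_right _ hn
  have hgm : g ∣ m := Nat.gcd_dvd_left m n
  have hgn : g ∣ n := Nat.gcd_dvd_right m n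
  have hMm : m = g * M := (Nat.div_mul_cancel hgm).symm.trans (mul_comm _ _)
  have hMdvd : M ∣ m := ⟨g, by rw [hMm, mul_comm]⟩
  have hM0 : 0 < M := Nat.div_pos (Nat.le_of_dvd hm hgm) hg0
  have hM1 : 1 < M := by
    have hgle : g ≤ n := Nat.le_of_dvd hn hgn
    have hne : M ≠ 1 := fun h => by rw [h, mul_one] at hMm; omega
    omega
  set n' := n / g with hn'def
  have hnn' : n = g * n' := (Nat.div_mul_cancel hgn).symm.trans (mul_comm _ _)
  have hco : n'.Coprime M := (Nat.coprime_div_gcd_div_gcd hg0).symm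
  haveI : NeZero m := ⟨hm.ne'⟩
  haveI : NeZero M := ⟨hM0.ne'⟩
  obtain ⟨ζ₀, hζ₀⟩ : ∃ ζ : ℂ, IsPrimitiveRoot ζ m :=
    ⟨_, Complex.isPrimitiveRoot_exp m hm.ne'⟩
  set ξ₀ := ζ₀ ^ g with hξ₀def
  have hξ₀ : IsPrimitiveRoot ξ₀ M := hζ₀.pow hm hMm
  set c : (ZMod M)ˣ := ZMod.unitOfCoprime n' hco with hcdef
  set F : (ZMod M)ˣ → ℝ := fun v => ‖ξ₀ ^ (v : ZMod M).val - 1‖ with hFdef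
  -- pointwise identity
  have hpoint : ∀ u : (ZMod m)ˣ,
      ‖(ζ₀ ^ (u : ZMod m).val) ^ n - 1‖ = F (ZMod.unitsMap hMdvd u * c) := by
    intro u
    have h1 : (ζ₀ ^ (u : ZMod m).val) ^ n = ξ₀ ^ ((u : ZMod m).val * n') := by
      rw [← pow_mul, hξ₀def, ← pow_mul]
      congr 1
      rw [hnn']; ring
    have h2 : ξ₀ ^ ((u : ZMod m).val * n')
        = ξ₀ ^ ((((u : ZMod m).val * n' : ℕ) : ZMod M)).val := by
      conv_lhs => rw [← Nat.div_add_mod ((u : ZMod m).val * n') M]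
      rw [pow_add, pow_mul, hξ₀.pow_eq_one, one_pow, one_mul, ZMod.val_natCast]
    have h3 : ((((u : ZMod m).val * n' : ℕ) : ZMod M))
        = ((ZMod.unitsMap hMdvd u * c : (ZMod M)ˣ) : ZMod M) := by
      push_cast
      try congr 1
      all_goals try rw [ZMod.natCast_val, ZMod.unitsMap_def, Units.coe_map, MonoidHom.coe_coe,
          ZMod.castHom_apply]
      all_goals try rw [ZMod.coe_unitOfCoprime]
    rw [h1, h2, h3, hFdef]
  calc ∏ ζ ∈ primitiveRoots m ℂ, ‖ζ ^ n - 1‖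
      = ∏ u : (ZMod m)ˣ, ‖(ζ₀ ^ (u : ZMod m).val) ^ n - 1‖ :=
        prod_primRoots_eq hζ₀ (fun ξ => ‖ξ ^ n - 1‖)
    _ = ∏ u : (ZMod m)ˣ, F (ZMod.unitsMap hMdvd u * c) := Fintype.prod_congr _ _ hpoint
    _ = (∏ v : (ZMod M)ˣ, F (v * c)) ^ (Fintype.card (ZMod m)ˣ / Fintype.card (ZMod M)ˣ) := by
        exact prod_comp_surj _ (ZMod.unitsMap_surjective hMdvd) (fun v => F (v * c))
    _ = (∏ v : (ZMod M)ˣ, F v) ^ (Nat.totient m / Nat.totient M) := by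
        have he := Equiv.prod_comp (Equiv.mulRight c) F
        simp only [Equiv.coe_mulRight] at he
        rw [he, ZMod.card_units_eq_totient, ZMod.card_units_eq_totient]
    _ = (∏ ξ ∈ primitiveRoots M ℂ, ‖ξ - 1‖) ^ (Nat.totient m / Nat.totient M) := by
        rw [prod_primRoots_eq hξ₀ (fun ξ => ‖ξ - 1‖)]

lemma Bval (M : ℕ) (hM : 2 ≤ M) :
    ∏ ξ ∈ primitiveRoots M ℂ, ‖ξ - 1‖
      = if IsPrimePow M then (M.minFac : ℝ) else 1 := by
  have hM0 : 0 < M := by omega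
  haveI : NeZero M := ⟨hM0.ne'⟩
  obtain ⟨ξ₀, hξ₀⟩ : ∃ ξ : ℂ, IsPrimitiveRoot ξ M :=
    ⟨_, Complex.isPrimitiveRoot_exp M hM0.ne'⟩
  have h1 : ∏ ξ ∈ primitiveRoots M ℂ, ‖ξ - 1‖
      = ‖(cyclotomic M ℂ).eval 1‖ := by
    rw [cyclotomic_eq_prod_X_sub_primitiveRoots hξ₀, eval_prod, norm_prod]
    refine Finset.prod_congr rfl fun ξ _ => ?_
    rw [eval_sub, eval_X, eval_C, norm_sub_rev]
  rw [h1]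
  split_ifs with h
  · obtain ⟨p, k, hp, hk, rfl⟩ := h
    haveI : Fact (Nat.Prime p) := ⟨hp.nat_prime⟩
    obtain ⟨k, rfl⟩ : ∃ j, k = j + 1 := ⟨k - 1, by omega⟩
    rw [eval_one_cyclotomic_prime_pow]
    rw [Nat.Prime.pow_minFac hp.nat_prime (by omega)]
    simp [Complex.norm_natCast]
  · rw [eval_one_cyclotomic_not_prime_pow, norm_one]
    intro p hp k hk
    rcases Nat.eq_zero_or_pos k with rfl | hk0
    · simp at hk; omega
    · exact h ⟨p, k, hp.prime, hk0, hk⟩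
lemma absF_pos {m d : ℕ} (hd : 0 < d) (hdm : d < m) :
    0 < ∏ ζ ∈ primitiveRoots m ℂ, ‖(cyclotomic d ℂ).eval ζ‖ := by
  apply Finset.prod_pos
  intro ζ hζ
  have hm : 0 < m := hd.trans hdm
  have hζ' : IsPrimitiveRoot ζ m := (mem_primitiveRoots hm).mp hζ
  haveI : NeZero ((d : ℂ)) := ⟨Nat.cast_ne_zero.mpr hd.ne'⟩
  rw [norm_pos_iff]
  intro h0
  have : IsPrimitiveRoot ζ d := isRoot_cyclotomic_iff.mp h0
  exact absurd (this.unique hζ') hdm.ne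

lemma keyF (m : ℕ) : ∀ n, 0 < n → n < m →
    (∏ ζ ∈ primitiveRoots m ℂ, ‖(cyclotomic n ℂ).eval ζ‖) = (T m n : ℝ) := by
  intro n
  induction n using Nat.strong_induction_on with
  | _ n IH =>
    intro hn hnm
    have hm : 0 < m := hn.trans hnm
    set M := m / Nat.gcd m n with hMdef
    have hg0 : 0 < Nat.gcd m n := Nat.gcd_pos_of_pos_right _ hn
    have hgm : Nat.gcd m n ∣ m := Nat.gcd_dvd_left m n
    have hM1 : 1 < M := by
      have hgle : Nat.gcd m n ≤ n := Nat.le_of_dvd hn (Nat.gcd_dvd_right m n)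
      have hMm : m = Nat.gcd m n * M := (Nat.div_mul_cancel hgm).symm.trans (mul_comm _ _)
      have hne : M ≠ 1 := fun h => by rw [h, mul_one] at hMm; omega
      have hM0 : 0 < M := Nat.div_pos (Nat.le_of_dvd hm hgm) hg0
      omega
    -- the divisor-product identity
    have hdiv : ∏ d ∈ n.divisors, (∏ ζ ∈ primitiveRoots m ℂ,
        ‖(cyclotomic d ℂ).eval ζ‖) = ∏ d ∈ n.divisors, (T m d : ℝ) := by
      rw [Finset.prod_comm]
      have h1 : ∀ ζ ∈ primitiveRoots m ℂ,
          (∏ d ∈ n.divisors, ‖(cyclotomic d ℂ).eval ζ‖)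
            = ‖ζ ^ n - 1‖ := by
        intro ζ hζ
        rw [← norm_prod, ← eval_prod, prod_cyclotomic_eq_X_pow_sub_one hn, eval_sub,
          eval_pow, eval_X, eval_one]
      rw [Finset.prod_congr rfl h1, Qval m n hn hnm, Bval M (by omega), ← hMdef]
      rw [← Nat.cast_prod, NT m n hn hnm]
      split_ifs with h
      · push_cast
        ring
      · simp
    -- peel off the top divisor
    have hpeel : n.divisors = insert n n.properDivisors := (Nat.insert_self_properDivisors hn.ne').symm
    have hnotmem : n ∉ n.properDivisors := fun h => (Nat.mem_properDivisors.mp h).2.ne rfl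
    rw [hpeel, Finset.prod_insert hnotmem, Finset.prod_insert hnotmem] at hdiv
    have hIH : ∀ d ∈ n.properDivisors, (∏ ζ ∈ primitiveRoots m ℂ,
        ‖(cyclotomic d ℂ).eval ζ‖) = (T m d : ℝ) := by
      intro d hd
      rw [Nat.mem_properDivisors] at hd
      exact IH d hd.2 (Nat.pos_of_dvd_of_pos hd.1 hn) (hd.2.trans hnm)
    rw [Finset.prod_congr rfl hIH] at hdiv
    have hPpos : (0 : ℝ) < ∏ d ∈ n.properDivisors, (T m d : ℝ) := by
      apply Finset.prod_pos
      intro d _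
      exact_mod_cast T_pos m d
    exact mul_right_cancel₀ hPpos.ne' hdiv

/-- For `m > n ≥ 1`, the absolute value of the resultant of the cyclotomic polynomials
`Φ_n` and `Φ_m` is `p^φ(n)` if `m = n * p^α` for a prime `p` and `α ≥ 1`, and `1` otherwise.
Since both polynomials are monic, the resultant `Res(Φ_n, Φ_m)` is, up to sign, the product
of `Φ_n` over the roots of `Φ_m`, i.e. over the primitive `m`-th roots of unity in `ℂ`. -/
theorem stmt2 (n m : ℕ) (hn : 1 ≤ n) (hnm : n < m) :
    (∀ p α : ℕ, p.Prime → 1 ≤ α → m = n * p ^ α →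
      ‖∏ ζ ∈ primitiveRoots m ℂ, (cyclotomic n ℂ).eval ζ‖ =
        (p : ℝ) ^ n.totient) ∧
    ((¬ ∃ p α : ℕ, p.Prime ∧ 1 ≤ α ∧ m = n * p ^ α) →
      ‖∏ ζ ∈ primitiveRoots m ℂ, (cyclotomic n ℂ).eval ζ‖ = 1) := by
  constructor
  · intro p α hp hα hm
    rw [norm_prod, keyF m n hn hnm]
    have h1 : n ∣ m := ⟨p ^ α, hm⟩
    have h2 : m / n = p ^ α := by rw [hm, Nat.mul_div_cancel_left _ hn]
    rw [T, if_pos ⟨h1, h2 ▸ ⟨p, α, hp.prime, hα, rfl⟩⟩, h2,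
      Nat.Prime.pow_minFac hp (by omega)]
    push_cast
    ring
  · intro hne
    rw [norm_prod, keyF m n hn hnm, T, if_neg, Nat.cast_one]
    rintro ⟨hdvd, q, s, hq, hs, hqs⟩
    exact hne ⟨q, s, hq.nat_prime, hs, by
      rw [← Nat.mul_div_cancel' hdvd, ← hqs]⟩
end

section
/- Let n be an odd positive integer and m = 2t+1 an odd positive integer with gcd(m, n) = 1 and 0 ≤ t < n. Define f(x) = 1 + x + ... + x^t and g(x) = 1 + x + ... + x^{t-1}. Then ∏_{j=0}^{n-1} (f(ω^j)f(ω^{-j}) - g(ω^j)g(ω^{-j})) = m, where ω = e^{2πi/n}. -/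
open Polynomial

private lemma sq_identity (x : ℂ) (t : ℕ) :
    (∑ i ∈ Finset.range (t + 1), x ^ i) ^ 2 - x * (∑ i ∈ Finset.range t, x ^ i) ^ 2 =
      ∑ i ∈ Finset.range (2 * t + 1), x ^ i := by
  induction t with
  | zero => simp
  | succ t ih =>
    rw [Finset.sum_range_succ] at ih
    rw [Finset.sum_range_succ (n := t + 1), Finset.sum_range_succ (n := t),
      show 2 * (t + 1) + 1 = (2 * t + 1) + 1 + 1 by ring, Finset.sum_range_succ,
      Finset.sum_range_succ]
    linear_combination ih

private lemma term_eq (x : ℂ) (hx : x ≠ 0) (t : ℕ) :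
    (∑ i ∈ Finset.range (t + 1), x ^ i) * (∑ i ∈ Finset.range (t + 1), (x⁻¹) ^ i) -
      (∑ i ∈ Finset.range t, x ^ i) * (∑ i ∈ Finset.range t, (x⁻¹) ^ i) =
      (x⁻¹) ^ t * ∑ i ∈ Finset.range (2 * t + 1), x ^ i := by
  have hxt : x ^ t ≠ 0 := pow_ne_zero _ hx
  apply mul_right_cancel₀ hxt
  have hf : (∑ i ∈ Finset.range (t + 1), (x⁻¹) ^ i) * x ^ t =
      ∑ i ∈ Finset.range (t + 1), x ^ i := by
    rw [Finset.sum_mul]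
    rw [← Finset.sum_range_reflect (fun i => x ^ i) (t + 1)]
    refine Finset.sum_congr rfl fun i hi => ?_
    rw [Finset.mem_range] at hi
    rw [inv_pow, show (t + 1) - 1 - i = t - i from rfl,
      pow_sub₀ x hx (Nat.lt_succ_iff.mp hi)]
    exact mul_comm _ _
  have hg : (∑ i ∈ Finset.range t, (x⁻¹) ^ i) * x ^ t =
      x * ∑ i ∈ Finset.range t, x ^ i := by
    rw [Finset.sum_mul, Finset.mul_sum]
    rw [← Finset.sum_range_reflect (fun i => x * x ^ i) t]
    refine Finset.sum_congr rfl fun i hi => ?_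
    rw [Finset.mem_range] at hi
    rw [inv_pow, ← pow_succ', show (t - 1 - i) + 1 = t - i by omega,
      pow_sub₀ x hx hi.le]
    exact mul_comm _ _
  calc ((∑ i ∈ Finset.range (t + 1), x ^ i) * (∑ i ∈ Finset.range (t + 1), (x⁻¹) ^ i) -
      (∑ i ∈ Finset.range t, x ^ i) * (∑ i ∈ Finset.range t, (x⁻¹) ^ i)) * x ^ t
      = (∑ i ∈ Finset.range (t + 1), x ^ i) *
          ((∑ i ∈ Finset.range (t + 1), (x⁻¹) ^ i) * x ^ t) -
        (∑ i ∈ Finset.range t, x ^ i) *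
          ((∑ i ∈ Finset.range t, (x⁻¹) ^ i) * x ^ t) := by ring
    _ = (∑ i ∈ Finset.range (t + 1), x ^ i) ^ 2 - x * (∑ i ∈ Finset.range t, x ^ i) ^ 2 := by
        rw [hf, hg]; ring
    _ = ∑ i ∈ Finset.range (2 * t + 1), x ^ i := sq_identity x t
    _ = ((x⁻¹) ^ t * ∑ i ∈ Finset.range (2 * t + 1), x ^ i) * x ^ t := by
        rw [inv_pow]
        field_simp

/-- Let `n` be odd, `m = 2t+1` with `gcd(m,n) = 1` and `0 ≤ t < n`. With
`f = 1 + X + ⋯ + X^t` and `g = 1 + X + ⋯ + X^{t-1}`, the dihedral group determinant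
`∏_{j<n} (f(ω^j) f(ω^{-j}) - g(ω^j) g(ω^{-j}))` equals `m`, where `ω = e^{2πi/n}`. -/
theorem stmt5 (n t m : ℕ) (hn : Odd n) (hpos : 0 < n) (hm : m = 2 * t + 1)
    (hcop : Nat.Coprime m n) (ht : t < n) :
    (∏ j ∈ Finset.range n,
      (Polynomial.aeval ((Complex.exp (2 * Real.pi * Complex.I / n)) ^ j)
          (∑ i ∈ Finset.range (t + 1), (X : Polynomial ℤ) ^ i) *
        Polynomial.aeval (((Complex.exp (2 * Real.pi * Complex.I / n)) ^ j)⁻¹)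
          (∑ i ∈ Finset.range (t + 1), (X : Polynomial ℤ) ^ i) -
       Polynomial.aeval ((Complex.exp (2 * Real.pi * Complex.I / n)) ^ j)
          (∑ i ∈ Finset.range t, (X : Polynomial ℤ) ^ i) *
        Polynomial.aeval (((Complex.exp (2 * Real.pi * Complex.I / n)) ^ j)⁻¹)
          (∑ i ∈ Finset.range t, (X : Polynomial ℤ) ^ i))) = (m : ℂ) := by
  set ω : ℂ := Complex.exp (2 * Real.pi * Complex.I / n) with hωdef
  have hω : IsPrimitiveRoot ω n := Complex.isPrimitiveRoot_exp n hpos.ne'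
  have hω0 : ω ≠ 0 := hω.ne_zero hpos.ne'
  -- rewrite each factor
  have hterm : ∀ j ∈ Finset.range n,
      (Polynomial.aeval (ω ^ j) (∑ i ∈ Finset.range (t + 1), (X : Polynomial ℤ) ^ i) *
        Polynomial.aeval ((ω ^ j)⁻¹) (∑ i ∈ Finset.range (t + 1), (X : Polynomial ℤ) ^ i) -
       Polynomial.aeval (ω ^ j) (∑ i ∈ Finset.range t, (X : Polynomial ℤ) ^ i) *
        Polynomial.aeval ((ω ^ j)⁻¹) (∑ i ∈ Finset.range t, (X : Polynomial ℤ) ^ i)) =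
      ((ω ^ j)⁻¹) ^ t * ∑ i ∈ Finset.range (2 * t + 1), (ω ^ j) ^ i := by
    intro j _
    have hx : (ω : ℂ) ^ j ≠ 0 := pow_ne_zero _ hω0
    simpa [map_sum] using term_eq (ω ^ j) hx t
  rw [Finset.prod_congr rfl hterm, Finset.prod_mul_distrib]
  -- the power factor is 1
  have h2 : 2 ∣ (n - 1) := by obtain ⟨k, hk⟩ := hn; omega
  have hsum : ∑ j ∈ Finset.range n, j = n * ((n - 1) / 2) := by
    rw [Finset.sum_range_id, Nat.mul_div_assoc n h2]
  have hpow1 : (∏ j ∈ Finset.range n, ((ω ^ j)⁻¹) ^ t) = 1 := by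
    have h1 : (∏ j ∈ Finset.range n, (ω ^ j)⁻¹) =
        (ω ^ (∑ j ∈ Finset.range n, j))⁻¹ := by
      rw [← Finset.prod_pow_eq_pow_sum, ← Finset.prod_inv_distrib]
    rw [Finset.prod_pow, h1, hsum, pow_mul, hω.pow_eq_one]
    simp
  rw [hpow1, one_mul]
  -- now the main product
  obtain ⟨n', rfl⟩ : ∃ n', n = n' + 1 := ⟨n - 1, by omega⟩
  rw [Finset.prod_range_succ']
  have h0 : (∑ i ∈ Finset.range (2 * t + 1), ((ω : ℂ) ^ 0) ^ i) = (m : ℂ) := by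
    simp [hm]
  rw [h0]
  have hη : IsPrimitiveRoot (ω ^ m) (n' + 1) := hω.pow_of_coprime m hcop
  have key : ∀ j, (∑ i ∈ Finset.range (2 * t + 1), ((ω : ℂ) ^ (j + 1)) ^ i) *
      (ω ^ (j + 1) - 1) = (ω ^ m) ^ (j + 1) - 1 := by
    intro j
    rw [geom_sum_mul, ← hm, ← pow_mul, ← pow_mul, Nat.mul_comm]
  have hA := hω.prod_pow_sub_one_eq_order (n := n')
  have hB := hη.prod_pow_sub_one_eq_order (n := n')
  have hAne : (∏ k ∈ Finset.range n', ((ω : ℂ) ^ (k + 1) - 1)) ≠ 0 := by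
    intro h
    rw [h, mul_zero] at hA
    have h1 : ((n' + 1 : ℕ) : ℂ) ≠ 0 := Nat.cast_ne_zero.mpr (Nat.succ_ne_zero n')
    push_cast at h1
    exact h1 hA.symm
  have hprodeq : (∏ j ∈ Finset.range n',
      (∑ i ∈ Finset.range (2 * t + 1), ((ω : ℂ) ^ (j + 1)) ^ i)) *
      (∏ k ∈ Finset.range n', ((ω : ℂ) ^ (k + 1) - 1)) =
      ∏ k ∈ Finset.range n', ((ω : ℂ) ^ (k + 1) - 1) := by
    rw [← Finset.prod_mul_distrib]
    rw [Finset.prod_congr rfl fun j _ => key j]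
    exact mul_left_cancel₀ (pow_ne_zero n' (by norm_num : (-1 : ℂ) ≠ 0))
      (hB.trans hA.symm)
  have hP := mul_right_cancel₀ hAne (hprodeq.trans (one_mul _).symm)
  rw [hP, one_mul]
end

section
/- Let n be even and f, g ∈ ℤ[x]. If the integer D = ∏_{j=0}^{n-1} (f(ω^j)f(ω^{-j}) - g(ω^j)g(ω^{-j})) is odd (ω = e^{2πi/n}), then D ≡ 1 (mod 4). -/
open Polynomial

private lemma zmod4_aux : ∀ a b c d w : ZMod 4,
    (a - c = 0 ∨ a - c = 2) → (b - d = 0 ∨ b - d = 2) →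
    (a ^ 2 - b ^ 2) * (c ^ 2 - d ^ 2) * w ^ 2 ≠ 3 := by decide

private lemma two_mul_zmod4 : ∀ t : ZMod 4, 2 * t = 0 ∨ 2 * t = 2 := by decide

set_option maxHeartbeats 2000000 in
/-- For `n` even and `f, g ∈ ℤ[X]`: if the integer dihedral determinant
`D = ∏_{j<n} (f(ω^j) f(ω^{-j}) - g(ω^j) g(ω^{-j}))` is odd, then `D ≡ 1 (mod 4)`. -/
theorem stmt6 (n : ℕ) (hn : Even n) (hpos : 0 < n) (f g : Polynomial ℤ) (D : ℤ)
    (hD : (∏ j ∈ Finset.range n,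
        (Polynomial.aeval ((Complex.exp (2 * Real.pi * Complex.I / n)) ^ j) f *
          Polynomial.aeval (((Complex.exp (2 * Real.pi * Complex.I / n)) ^ j)⁻¹) f -
         Polynomial.aeval ((Complex.exp (2 * Real.pi * Complex.I / n)) ^ j) g *
          Polynomial.aeval (((Complex.exp (2 * Real.pi * Complex.I / n)) ^ j)⁻¹) g)) = (D : ℂ))
    (hodd : Odd D) : D % 4 = 1 := by
  have hn0 : n ≠ 0 := hpos.ne'
  haveI : NeZero n := ⟨hn0⟩
  set ζ : ℂ := Complex.exp (2 * Real.pi * Complex.I / n) with hζdef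
  have hζ : IsPrimitiveRoot ζ n := Complex.isPrimitiveRoot_exp n hn0
  have hζint : IsIntegral ℚ ζ :=
    ⟨X ^ n - 1, monic_X_pow_sub_C 1 hn0, by simp [hζ.pow_eq_one]⟩
  set K : IntermediateField ℚ ℂ := IntermediateField.adjoin ℚ {ζ} with hKdef
  set ζK : K := ⟨ζ, IntermediateField.mem_adjoin_simple_self ℚ ζ⟩ with hζKdef
  have hζK : IsPrimitiveRoot ζK n := by
    rw [← IsPrimitiveRoot.coe_submonoidClass_iff (B := IntermediateField ℚ ℂ) (N := K)]
    exact hζ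
  have hEq : K.toSubalgebra = Algebra.adjoin ℚ {ζ} :=
    IntermediateField.adjoin_simple_toSubalgebra_of_isAlgebraic hζint.isAlgebraic
  haveI hcyc : IsCyclotomicExtension {n} ℚ K := by
    have h1 : IsCyclotomicExtension {n} ℚ (Algebra.adjoin ℚ ({ζ} : Set ℂ)) :=
      hζ.adjoin_isCyclotomicExtension ℚ (n := n)
    exact IsCyclotomicExtension.equiv _ ℚ _
      (Subalgebra.equivOfEq (Algebra.adjoin ℚ {ζ}) K.toSubalgebra hEq.symm)
  haveI : IsGalois ℚ K := IsCyclotomicExtension.isGalois (S := {n}) (K := ℚ) (L := K)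
  haveI : FiniteDimensional ℚ K := IsCyclotomicExtension.finiteDimensional (S := {n}) (K := ℚ) K
  have hfix : ∀ x : K, (∀ σ : K ≃ₐ[ℚ] K, σ x = x) → ∃ q : ℚ, algebraMap ℚ K q = x := by
    intro x hx
    have hmem : x ∈ IntermediateField.fixedField (⊤ : Subgroup (K ≃ₐ[ℚ] K)) := fun σ => hx σ
    have hbot : IntermediateField.fixedField (⊤ : Subgroup (K ≃ₐ[ℚ] K)) = ⊥ :=
      OrderIso.map_bot (IsGalois.intermediateFieldEquivSubgroup (F := ℚ) (E := K)).symm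
    rw [hbot] at hmem
    exact IntermediateField.mem_bot.mp hmem
  obtain ⟨s, hs⟩ := hn
  have hs1 : 0 < s := by omega
  have hsn : s < n := by omega
  have hpow_mod : ∀ m : ℕ, ζK ^ m = ζK ^ (m % n) := by
    intro m
    conv_lhs => rw [← Nat.mod_add_div m n]
    rw [pow_add, pow_mul, hζK.pow_eq_one, one_pow, mul_one]
  set ze : ZMod n → K := fun a => ζK ^ a.val with hzedef
  have hze : ∀ m : ℕ, ζK ^ m = ze ((m : ZMod n)) := by
    intro m
    rw [hzedef]
    simp only [ZMod.val_natCast]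
    exact hpow_mod m
  have hze_cast : ∀ a : ZMod n, ze ((a.val : ℕ) : ZMod n) = ze a := by
    intro a
    rw [ZMod.natCast_val, ZMod.cast_id]
  have hze_add : ∀ a b : ZMod n, ze (a + b) = ze a * ze b := by
    intro a b
    rw [hzedef]
    show ζK ^ (a + b).val = ζK ^ a.val * ζK ^ b.val
    rw [← pow_add, hze (a.val + b.val), hze ((a+b).val)]
    push_cast
    rw [ZMod.natCast_val, ZMod.natCast_val, ZMod.natCast_val, ZMod.cast_id, ZMod.cast_id,
      ZMod.cast_id]
  have hze_zero : ze 0 = 1 := by rw [hzedef]; simp [ZMod.val_zero]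
  have hze_inv : ∀ a : ZMod n, ze (-a) = (ze a)⁻¹ := by
    intro a
    refine eq_inv_of_mul_eq_one_left ?_
    rw [← hze_add]
    simp [hze_zero]
  set FK : K → K := fun x => aeval x f * aeval x⁻¹ f - aeval x g * aeval x⁻¹ g with hFKdef
  have hFK_inv : ∀ x : K, FK x⁻¹ = FK x := by
    intro x; simp only [hFKdef, inv_inv]; ring
  set T : ZMod n → K := fun a => FK (ze a) with hTdef
  have hT_neg : ∀ a : ZMod n, T (-a) = T a := by
    intro a; simp only [hTdef, hze_inv, hFK_inv]
  -- reduction map to Ioo 0 s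
  set r : ZMod n → ℕ := fun a => if a.val < s then a.val else n - a.val with hrdef
  have hcast_ne : ∀ j : ℕ, 0 < j → j < n → ((j : ZMod n) : ZMod n) ≠ 0 := by
    intro j hj0 hjn h
    rw [ZMod.natCast_eq_zero_iff] at h
    exact absurd (Nat.le_of_dvd hj0 h) (by omega)
  have hr_mem : ∀ a : ZMod n, 2 * a ≠ 0 → r a ∈ Finset.Ioo 0 s := by
    intro a h2
    have ha0 : a ≠ 0 := by rintro rfl; simp at h2
    have hv0 : a.val ≠ 0 := fun h => ha0 (by rwa [ZMod.val_eq_zero] at h)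
    have hvn : a.val < n := ZMod.val_lt a
    have hvs : a.val ≠ s := by
      intro h
      apply h2
      have : a = ((s : ℕ) : ZMod n) := by
        rw [← h, ZMod.natCast_val, ZMod.cast_id]
      rw [this, ← Nat.cast_ofNat, ← Nat.cast_mul]
      have : (2 * s) = n := by omega
      rw [this, ZMod.natCast_self]
    rw [hrdef]
    simp only [Finset.mem_Ioo]
    split_ifs with h
    · omega
    · omega
  have hr_cast : ∀ a : ZMod n, ((r a : ℕ) : ZMod n) = a ∨ ((r a : ℕ) : ZMod n) = -a := by
    intro a
    simp only [hrdef]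
    split_ifs with h
    · left; rw [ZMod.natCast_val, ZMod.cast_id]
    · right
      have hvn : a.val ≤ n := (ZMod.val_lt a).le
      push_cast [Nat.cast_sub hvn]
      rw [ZMod.natCast_self, ZMod.natCast_val, ZMod.cast_id]
      ring
  have hr_T : ∀ a : ZMod n, T ((r a : ℕ) : ZMod n) = T a := by
    intro a
    rcases hr_cast a with h | h
    · rw [h]
    · rw [h, hT_neg]
  have hr_pm : ∀ j ∈ Finset.Ioo 0 s, ∀ a : ZMod n,
      (a = ((j : ℕ) : ZMod n) ∨ a = -((j : ℕ) : ZMod n)) → r a = j := by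
    intro j hj a ha
    simp only [Finset.mem_Ioo] at hj
    have hjn : j < n := by omega
    have hval : ((j : ℕ) : ZMod n).val = j := ZMod.val_cast_of_lt hjn
    rcases ha with rfl | rfl
    · rw [hrdef]; simp only [hval]; rw [if_pos hj.2]
    · have hneg : (-((j : ℕ) : ZMod n)) = (((n - j : ℕ)) : ZMod n) := by
        push_cast [Nat.cast_sub hjn.le]
        rw [ZMod.natCast_self]; ring
      have hval2 : (-((j : ℕ) : ZMod n)).val = n - j := by
        rw [hneg]; exact ZMod.val_cast_of_lt (by omega)
      rw [hrdef]
      simp only [hval2]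
      rw [if_neg (by omega)]
      omega
  -- the key bijection lemma
  have hprod_unit : ∀ u : (ZMod n)ˣ,
      ∏ j ∈ Finset.Ioo 0 s, T ((u : ZMod n) * ((j : ℕ) : ZMod n))
        = ∏ j ∈ Finset.Ioo 0 s, T ((j : ℕ) : ZMod n) := by
    intro u
    have hmem : ∀ (v : (ZMod n)ˣ), ∀ j ∈ Finset.Ioo 0 s,
        r ((v : ZMod n) * ((j : ℕ) : ZMod n)) ∈ Finset.Ioo 0 s := by
      intro v j hj
      apply hr_mem
      simp only [Finset.mem_Ioo] at hj
      have h2j : ((2 * j : ℕ) : ZMod n) ≠ 0 := hcast_ne _ (by omega) (by omega)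
      intro h
      apply h2j
      have : (2 : ZMod n) * ((v : ZMod n) * ((j:ℕ) : ZMod n)) = (v : ZMod n) * ((2*j : ℕ) : ZMod n) := by
        push_cast; ring
      rw [this] at h
      rw [← Units.mul_right_eq_zero v]
      exact h
    have hcomp : ∀ (v : (ZMod n)ˣ), ∀ j ∈ Finset.Ioo 0 s,
        r ((v⁻¹ : (ZMod n)ˣ) * ((r ((v : ZMod n) * ((j : ℕ) : ZMod n)) : ℕ) : ZMod n)) = j := by
      intro v j hj
      apply hr_pm j hj
      rcases hr_cast ((v : ZMod n) * ((j : ℕ) : ZMod n)) with h | h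
      · left; rw [h, ← mul_assoc]
        norm_cast
        simp
      · right; rw [h]
        rw [mul_neg, ← mul_assoc]
        norm_cast
        simp
    refine Finset.prod_nbij' (fun j => r ((u : ZMod n) * ((j : ℕ) : ZMod n)))
      (fun j => r (((u⁻¹ : (ZMod n)ˣ) : ZMod n) * ((j : ℕ) : ZMod n))) (hmem u) (hmem u⁻¹) ?_ ?_ ?_
    · intro j hj
      exact hcomp u j hj
    · intro j hj
      have := hcomp u⁻¹ j hj
      rwa [inv_inv] at this
    · intro j hj
      rw [hr_T]
  set Pb : K := ∏ j ∈ Finset.Ioo 0 s, T ((j : ℕ) : ZMod n) with hPbdef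
  have hPb_fixed : ∀ σ : K ≃ₐ[ℚ] K, σ Pb = Pb := by
    intro σ
    have h1 : (σ ζK) ^ n = 1 := by rw [← map_pow, hζK.pow_eq_one, map_one]
    obtain ⟨k, hklt, hk⟩ := hζK.eq_pow_of_pow_eq_one h1
    have hprim : IsPrimitiveRoot (σ ζK) n := hζK.map_of_injective σ.injective
    have hkcop : k.Coprime n := (hζK.pow_iff_coprime hpos k).mp (hk ▸ hprim)
    set u : (ZMod n)ˣ := ZMod.unitOfCoprime k hkcop with hudef
    have huk : (u : ZMod n) = (k : ℕ) := rfl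
    have hσze : ∀ a : ZMod n, σ (ze a) = ze ((u : ZMod n) * a) := by
      intro a
      have h2 : σ (ze a) = ζK ^ (k * a.val) := by
        show σ (ζK ^ a.val) = _
        rw [map_pow, ← hk, ← pow_mul]
      rw [h2, hze (k * a.val)]
      congr 1
      push_cast
      rw [huk, ZMod.natCast_val, ZMod.cast_id]
    have hσFK : ∀ x : K, σ (FK x) = FK (σ x) := by
      intro x
      have hae : ∀ (p : ℤ[X]) (y : K), σ (aeval y p) = aeval (σ y) p := by
        intro p y
        exact (aeval_algHom_apply (σ.toAlgHom.toRingHom.toIntAlgHom) y p).symm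
      simp only [hFKdef, map_sub, map_mul, hae, map_inv₀]
    have hσT : ∀ a : ZMod n, σ (T a) = T ((u : ZMod n) * a) := by
      intro a
      simp only [hTdef]
      rw [hσFK, hσze]
    rw [hPbdef, map_prod]
    simp only [hσT]
    exact hprod_unit u
  obtain ⟨q, hq⟩ := hfix Pb hPb_fixed
  -- q is an algebraic integer, hence an integer
  have hζKint : IsIntegral ℤ ζK :=
    ⟨X ^ n - 1, monic_X_pow_sub_C 1 hn0, by simp [hζK.pow_eq_one]⟩
  have haem : ∀ (p : ℤ[X]) (x : K), x ∈ integralClosure ℤ K →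
      aeval x p ∈ integralClosure ℤ K := by
    intro p x hx
    exact Algebra.adjoin_le (by simpa using hx) (Polynomial.aeval_mem_adjoin_singleton ℤ x)
  have hze_mem : ∀ b : ZMod n, ze b ∈ integralClosure ℤ K := by
    intro b
    exact pow_mem (show ζK ∈ integralClosure ℤ K from hζKint) _
  have hTint : ∀ a : ZMod n, T a ∈ integralClosure ℤ K := by
    intro a
    have hinv : (ze a)⁻¹ ∈ integralClosure ℤ K := by rw [← hze_inv]; exact hze_mem _
    simp only [hTdef, hFKdef]
    exact sub_mem (mul_mem (haem _ _ (hze_mem a)) (haem _ _ hinv))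
      (mul_mem (haem _ _ (hze_mem a)) (haem _ _ hinv))
  have hqint : IsIntegral ℤ q := by
    have h1 : IsIntegral ℤ Pb := by
      have : Pb ∈ integralClosure ℤ K := by
        rw [hPbdef]
        exact prod_mem fun j _ => hTint _
      exact this
    rw [← hq] at h1
    exact (isIntegral_algebraMap_iff (algebraMap ℚ K).injective).mp h1
  obtain ⟨z, hz⟩ := IsIntegrallyClosed.isIntegral_iff.mp hqint
  -- transfer to ℂ
  set ψ : K →ₐ[ℤ] ℂ := (algebraMap K ℂ).toIntAlgHom with hψdef
  have hψζ : ψ ζK = ζ := rfl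
  have hψae : ∀ (p : ℤ[X]) (y : K), aeval (ψ y) p = ψ (aeval y p) :=
    fun p y => aeval_algHom_apply ψ y p
  have hψinv : ∀ y : K, ψ y⁻¹ = (ψ y)⁻¹ := fun y => map_inv₀ (algebraMap K ℂ) y
  have hψFK : ∀ y : K, ψ (FK y) = aeval (ψ y) f * aeval ((ψ y))⁻¹ f
      - aeval (ψ y) g * aeval ((ψ y))⁻¹ g := by
    intro y
    simp only [hFKdef, map_sub, map_mul, ← hψae, hψinv]
  have hterm : ∀ j : ℕ,
      aeval (ζ ^ j) f * aeval ((ζ ^ j)⁻¹) f - aeval (ζ ^ j) g * aeval ((ζ ^ j)⁻¹) g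
        = ψ (T ((j : ℕ) : ZMod n)) := by
    intro j
    have hzj : ζ ^ j = ψ (ze ((j : ℕ) : ZMod n)) := by
      rw [← hze, map_pow, hψζ]
    rw [hzj, hTdef, hψFK]
  have hDK : (D : ℂ) = ψ (∏ j ∈ Finset.range n, T ((j : ℕ) : ZMod n)) := by
    rw [← hD, map_prod]
    exact Finset.prod_congr rfl fun j _ => hterm j
  -- split the product
  have hsplit : ∏ j ∈ Finset.range n, T ((j : ℕ) : ZMod n)
      = T 0 * T ((s : ℕ) : ZMod n) * Pb ^ 2 := by
    have e2 : ∏ j ∈ Finset.Ico (s+1) n, T ((j : ℕ) : ZMod n)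
        = ∏ j ∈ Finset.Ico 1 s, T ((j : ℕ) : ZMod n) := by
      refine Finset.prod_nbij' (fun j => n - j) (fun j => n - j) ?_ ?_ ?_ ?_ ?_
      · intro j hj; simp only [Finset.mem_Ico] at *; omega
      · intro j hj; simp only [Finset.mem_Ico] at *; omega
      · intro j hj; simp only [Finset.mem_Ico] at hj; show n - (n - j) = j; omega
      · intro j hj; simp only [Finset.mem_Ico] at hj; show n - (n - j) = j; omega
      · intro j hj
        simp only [Finset.mem_Ico] at hj
        have hcast : (((n - j : ℕ)) : ZMod n) = -((j : ℕ) : ZMod n) := by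
          push_cast [Nat.cast_sub hj.2.le]
          rw [ZMod.natCast_self]; ring
        rw [hcast, hT_neg]
    have hIoo : Finset.Ioo 0 s = Finset.Ico 1 s := (Finset.Ico_succ_left_eq_Ioo 0 s).symm
    rw [Finset.range_eq_Ico,
      Finset.prod_eq_prod_Ico_succ_bot hpos,
      ← Finset.prod_Ico_consecutive _ (by omega : 1 ≤ s) (by omega : s ≤ n),
      Finset.prod_eq_prod_Ico_succ_bot (by omega : s < n),
      e2, hPbdef, hIoo]
    push_cast
    ring
  have hD2 : (D : ℂ) = ψ (T 0) * ψ (T ((s : ℕ) : ZMod n)) * ψ Pb ^ 2 := by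
    rw [hDK, hsplit, map_mul, map_mul, map_pow]
  -- evaluate the special terms
  have haev : ∀ (p : ℤ[X]) (x : ℤ), aeval ((x : ℂ)) p = ((p.eval x : ℤ) : ℂ) := by
    intro p x
    have h1 : ((x : ℤ) : ℂ) = algebraMap ℤ ℂ x := by simp
    rw [h1, aeval_algebraMap_apply_eq_algebraMap_eval]
    simp
  have hv1 : ψ (T 0) = ((f.eval 1 ^ 2 - g.eval 1 ^ 2 : ℤ) : ℂ) := by
    have h0 : T 0 = FK 1 := by simp only [hTdef, hze_zero]
    rw [h0, hψFK, map_one, inv_one]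
    rw [show (1 : ℂ) = ((1 : ℤ) : ℂ) by norm_num]
    simp only [haev]
    push_cast
    ring
  have hζs : ζ ^ s = -1 := by
    rw [hζdef, ← Complex.exp_nat_mul]
    have hne : (n : ℂ) ≠ 0 := Nat.cast_ne_zero.mpr hn0
    have h1 : (s : ℂ) * (2 * Real.pi * Complex.I / n) = Real.pi * Complex.I := by
      field_simp
      rw [hs]; push_cast; ring
    rw [h1, Complex.exp_pi_mul_I]
  have hvs : ψ (T ((s : ℕ) : ZMod n)) = ((f.eval (-1) ^ 2 - g.eval (-1) ^ 2 : ℤ) : ℂ) := by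
    have hzs : ψ (ze ((s : ℕ) : ZMod n)) = -1 := by
      rw [← hze s, map_pow, hψζ, hζs]
    rw [hTdef, hψFK, hzs]
    rw [show ((-1 : ℂ))⁻¹ = -1 by norm_num]
    rw [show (-1 : ℂ) = ((-1 : ℤ) : ℂ) by norm_num]
    simp only [haev]
    push_cast
    ring
  have hψPb : ψ Pb = ((z : ℤ) : ℂ) := by
    rw [← hq]
    have h1 : ψ (algebraMap ℚ K q) = algebraMap ℚ ℂ q :=
      (IsScalarTower.algebraMap_apply ℚ K ℂ q).symm
    rw [h1, ← hz]
    simp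
  have hDz : D = (f.eval 1 ^ 2 - g.eval 1 ^ 2) * (f.eval (-1) ^ 2 - g.eval (-1) ^ 2) * z ^ 2 := by
    have h1 : (D : ℂ) = (((f.eval 1 ^ 2 - g.eval 1 ^ 2) *
        (f.eval (-1) ^ 2 - g.eval (-1) ^ 2) * z ^ 2 : ℤ) : ℂ) := by
      rw [hD2, hv1, hvs, hψPb]; push_cast; ring
    exact_mod_cast h1
  -- parity of evaluations at 1 and -1
  have hmap2 : ∀ (p : ℤ[X]) (x : ℤ),
      ((p.eval x : ℤ) : ZMod 2) = (p.map (Int.castRingHom (ZMod 2))).eval ((x : ℤ) : ZMod 2) := by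
    intro p x
    rw [Polynomial.eval_map,
      show ((x : ZMod 2)) = (Int.castRingHom (ZMod 2)) x from rfl, Polynomial.eval₂_hom]
    rfl
  have hpar : ∀ p : ℤ[X], (2 : ℤ) ∣ (p.eval 1 - p.eval (-1)) := by
    intro p
    have h1 : ((p.eval 1 : ℤ) : ZMod 2) = ((p.eval (-1) : ℤ) : ZMod 2) := by
      rw [hmap2 p 1, hmap2 p (-1)]
      congr 1
    have h2 := (ZMod.intCast_eq_intCast_iff _ _ _).mp h1
    exact Int.ModEq.dvd h2.symm
  have hdiff : ∀ p : ℤ[X],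
      ((p.eval 1 : ℤ) : ZMod 4) - ((p.eval (-1) : ℤ) : ZMod 4) = 0 ∨
      ((p.eval 1 : ℤ) : ZMod 4) - ((p.eval (-1) : ℤ) : ZMod 4) = 2 := by
    intro p
    obtain ⟨t, ht⟩ := hpar p
    have h2 : ((p.eval 1 - p.eval (-1) : ℤ) : ZMod 4) = ((2 * t : ℤ) : ZMod 4) := by rw [ht]
    push_cast at h2
    rw [h2]
    exact two_mul_zmod4 _
  have hD4 : ((D : ℤ) : ZMod 4) ≠ 3 := by
    rw [hDz]
    push_cast
    exact zmod4_aux _ _ _ _ _ (hdiff f) (hdiff g)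
  have h2 : D % 2 = 1 := Int.odd_iff.mp hodd
  have h4 : D % 4 = 1 ∨ D % 4 = 3 := by omega
  rcases h4 with h | h
  · exact h
  · exfalso
    apply hD4
    have hdvd : (4 : ℤ) ∣ D - 3 := by omega
    have h0 : ((D - 3 : ℤ) : ZMod 4) = 0 := by
      rw [ZMod.intCast_zmod_eq_zero_iff_dvd]
      exact_mod_cast hdvd
    push_cast at h0
    exact sub_eq_zero.mp h0
end

section
/- Let n be odd and f, g ∈ ℤ[x]. If 2 divides the integer D = ∏_{j=0}^{n-1} (f(ω^j)f(ω^{-j}) - g(ω^j)g(ω^{-j})), where ω = e^{2πi/n}, then 4 divides D. -/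
open Polynomial

lemma sq_cong (p : Polynomial ℤ) : ∃ r : Polynomial ℤ, p ^ 2 = Polynomial.expand ℤ 2 p + 2 * r := by
  have h : (Polynomial.C (2:ℤ)) ∣ (p ^ 2 - Polynomial.expand ℤ 2 p) := by
    rw [Polynomial.C_dvd_iff_dvd_coeff]
    intro i
    have hmap : Polynomial.map (Int.castRingHom (ZMod 2)) (p ^ 2 - Polynomial.expand ℤ 2 p) = 0 := by
      have hfr : frobenius (ZMod 2) 2 = RingHom.id (ZMod 2) := by
        ext x; exact ZMod.pow_card x
      have hec := Polynomial.map_frobenius_expand (R := ZMod 2) (p := 2) (f := p.map (Int.castRingHom (ZMod 2)))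
      rw [hfr, Polynomial.map_id] at hec
      rw [Polynomial.map_sub, Polynomial.map_pow, Polynomial.map_expand, hec]
      ring
    have h2 := congrArg (fun q => Polynomial.coeff q i) hmap
    simp only [Polynomial.coeff_map, Polynomial.coeff_zero] at h2
    exact (ZMod.intCast_zmod_eq_zero_iff_dvd _ 2).mp h2
  obtain ⟨r, hr⟩ := h
  refine ⟨r, ?_⟩
  have hC : (Polynomial.C (2:ℤ)) = 2 := map_ofNat _ 2
  rw [hC] at hr
  linear_combination hr

/-- For `n` odd and `f, g ∈ ℤ[X]`: if `2` divides the integer dihedral determinant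
`D = ∏_{j<n} (f(ω^j) f(ω^{-j}) - g(ω^j) g(ω^{-j}))`, then `4` divides `D`. -/
theorem stmt7 (n : ℕ) (hn : Odd n) (hpos : 0 < n) (f g : Polynomial ℤ) (D : ℤ)
    (hD : (∏ j ∈ Finset.range n,
        (Polynomial.aeval ((Complex.exp (2 * Real.pi * Complex.I / n)) ^ j) f *
          Polynomial.aeval (((Complex.exp (2 * Real.pi * Complex.I / n)) ^ j)⁻¹) f -
         Polynomial.aeval ((Complex.exp (2 * Real.pi * Complex.I / n)) ^ j) g *
          Polynomial.aeval (((Complex.exp (2 * Real.pi * Complex.I / n)) ^ j)⁻¹) g)) = (D : ℂ))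
    (h2 : 2 ∣ D) : 4 ∣ D := by
  obtain ⟨k, hk⟩ := hn
  set ζc : ℂ := Complex.exp (2 * Real.pi * Complex.I / n) with hζc
  have hζ : IsPrimitiveRoot ζc n := Complex.isPrimitiveRoot_exp n hpos.ne'
  have hζcn : ζc ^ n = 1 := hζ.pow_eq_one
  set R := integralClosure ℤ ℂ with hR
  set ζ : R := ⟨ζc, hζ.isIntegral hpos⟩ with hζdef
  have hζn : ζ ^ n = 1 := by
    apply Subtype.coe_injective
    push_cast
    exact hζcn
  -- periodicity
  have hpm : ∀ a : ℕ, ζ ^ a = ζ ^ (a % n) := by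
    intro a
    conv_lhs => rw [← Nat.div_add_mod a n]
    rw [pow_add, pow_mul, hζn, one_pow, one_mul]
  have hpmc : ∀ a : ℕ, ζc ^ a = ζc ^ (a % n) := by
    intro a
    conv_lhs => rw [← Nat.div_add_mod a n]
    rw [pow_add, pow_mul, hζcn, one_pow, one_mul]
  -- Q in R
  set Qr : ℕ → R := fun j => aeval (ζ ^ (j % n)) f * aeval (ζ ^ (n - j % n)) f -
      aeval (ζ ^ (j % n)) g * aeval (ζ ^ (n - j % n)) g with hQr
  set Qc : ℕ → ℂ := fun j => aeval (ζc ^ j) f * aeval ((ζc ^ j)⁻¹) f -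
      aeval (ζc ^ j) g * aeval ((ζc ^ j)⁻¹) g with hQc
  have hD' : ∏ j ∈ Finset.range n, Qc j = (D : ℂ) := hD
  have hcoeA : ∀ (x : R) (p : Polynomial ℤ), ((aeval x p : R) : ℂ) = aeval (x : ℂ) p :=
    fun x p => (Polynomial.aeval_algHom_apply R.val x p).symm
  have hinvc : ∀ j : ℕ, (ζc ^ j)⁻¹ = ζc ^ (n - j % n) := by
    intro j
    have hjn : j % n ≤ n := le_of_lt (Nat.mod_lt _ hpos)
    symm
    apply eq_inv_of_mul_eq_one_left
    rw [hpmc j, ← pow_add]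
    rw [Nat.sub_add_cancel hjn]
    exact hζcn
  have hQcoe : ∀ j : ℕ, ((Qr j : R) : ℂ) = Qc j := by
    intro j
    push_cast [hQr, hQc, hcoeA]
    rw [hinvc j]
    rw [← hpmc j]
  -- symmetry of Qr
  have hQsym : ∀ a : ℕ, 1 ≤ a → a ≤ n - 1 → Qr (n - a) = Qr a := by
    intro a h1 h2
    have e1 : (n - a) % n = n - a := Nat.mod_eq_of_lt (by omega)
    have e2 : a % n = a := Nat.mod_eq_of_lt (by omega)
    have e3 : n - (n - a) = a := by omega
    simp only [hQr, e1, e2, e3]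
    ring
  -- aeval squaring in R
  have sqa : ∀ (p : Polynomial ℤ) (x : R), ∃ u : R, (aeval x p) ^ 2 = aeval (x ^ 2) p + 2 * u := by
    intro p x
    obtain ⟨r, hr⟩ := sq_cong p
    refine ⟨aeval x r, ?_⟩
    have : (aeval x) (p ^ 2) = aeval x (Polynomial.expand ℤ 2 p + 2 * r) := by rw [hr]
    rw [map_pow] at this
    rw [this, map_add, map_mul, Polynomial.expand_aeval, map_ofNat]
  have hzmul : ∀ a : ℕ, ζ ^ (n * a) = 1 := by
    intro a; rw [pow_mul, hζn, one_pow]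
  -- exponent congruence helpers
  have hxsq : ∀ j : ℕ, ζ ^ (2 * j % n) = (ζ ^ (j % n)) ^ 2 := by
    intro j
    have hdm := Nat.div_add_mod j n
    have hr : n * (j / n * 2) = 2 * (n * (j / n)) := by ring
    calc ζ ^ (2 * j % n) = ζ ^ (2 * j) := (hpm _).symm
      _ = ζ ^ (j % n * 2 + n * (j / n * 2)) := by congr 1; omega
      _ = ζ ^ (j % n * 2) := by rw [pow_add, hzmul, mul_one]
      _ = (ζ ^ (j % n)) ^ 2 := by rw [pow_mul]
  have hysq : ∀ j : ℕ, ζ ^ (n - 2 * j % n) = (ζ ^ (n - j % n)) ^ 2 := by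
    intro j
    have ha : j % n < n := Nat.mod_lt _ hpos
    have hdm := Nat.div_add_mod j n
    have hrr : 2 * (j / n) * n = 2 * (n * (j / n)) := by ring
    have e : 2 * j = 2 * (j % n) + 2 * (j / n) * n := by omega
    have h2a : 2 * j % n = 2 * (j % n) % n := by rw [e, Nat.add_mul_mod_self_right]
    rw [h2a, ← pow_mul]
    rcases lt_or_ge (2 * (j % n)) n with h | h
    · rw [Nat.mod_eq_of_lt h]
      have e2 : (n - j % n) * 2 = n + (n - 2 * (j % n)) := by omega
      rw [e2, pow_add, hζn, one_mul]
    · rw [Nat.mod_eq_sub_mod h, Nat.mod_eq_of_lt (by omega)]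
      congr 1
      omega
  -- Qr j ^ 2 ≡ Qr (2 j)  mod 2
  have hQd : ∀ j : ℕ, ∃ u : R, Qr j ^ 2 = Qr (2 * j) + 2 * u := by
    intro j
    obtain ⟨u1, h1⟩ := sqa f (ζ ^ (j % n))
    obtain ⟨u2, h2⟩ := sqa f (ζ ^ (n - j % n))
    obtain ⟨u3, h3⟩ := sqa g (ζ ^ (j % n))
    obtain ⟨u4, h4⟩ := sqa g (ζ ^ (n - j % n))
    have e1 : aeval ((ζ ^ (j % n)) ^ 2) f = (aeval (ζ ^ (j % n)) f) ^ 2 - 2 * u1 := by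
      rw [h1]; ring
    have e2 : aeval ((ζ ^ (n - j % n)) ^ 2) f = (aeval (ζ ^ (n - j % n)) f) ^ 2 - 2 * u2 := by
      rw [h2]; ring
    have e3 : aeval ((ζ ^ (j % n)) ^ 2) g = (aeval (ζ ^ (j % n)) g) ^ 2 - 2 * u3 := by
      rw [h3]; ring
    have e4 : aeval ((ζ ^ (n - j % n)) ^ 2) g = (aeval (ζ ^ (n - j % n)) g) ^ 2 - 2 * u4 := by
      rw [h4]; ring
    refine ⟨u2 * (aeval (ζ ^ (j % n)) f) ^ 2 + u1 * (aeval (ζ ^ (n - j % n)) f) ^ 2 - 2 * u1 * u2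
      - u4 * (aeval (ζ ^ (j % n)) g) ^ 2 - u3 * (aeval (ζ ^ (n - j % n)) g) ^ 2 + 2 * u3 * u4
      + (aeval (ζ ^ (j % n)) g) ^ 2 * (aeval (ζ ^ (n - j % n)) g) ^ 2
      - aeval (ζ ^ (j % n)) f * aeval (ζ ^ (n - j % n)) f * aeval (ζ ^ (j % n)) g
        * aeval (ζ ^ (n - j % n)) g, ?_⟩
    simp only [hQr, hxsq j, hysq j, e1, e2, e3, e4]
    ring
  -- m and its congruence
  set m : R := ∏ j ∈ Finset.Icc 1 k, Qr j with hm
  have hmcong : ∃ u : R, m ^ 2 = m + 2 * u := by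
    set I : Ideal R := Ideal.span {(2 : R)} with hI
    have hπ : (Ideal.Quotient.mk I) (m ^ 2) = (Ideal.Quotient.mk I) m := by
      have c1 : (Ideal.Quotient.mk I) (m ^ 2) =
          ∏ j ∈ Finset.Icc 1 k, (Ideal.Quotient.mk I) (Qr j ^ 2) := by
        rw [hm, ← Finset.prod_pow, map_prod]
      have c2 : ∀ j ∈ Finset.Icc 1 k,
          (Ideal.Quotient.mk I) (Qr j ^ 2) = (Ideal.Quotient.mk I)
            (Qr (if 2 * j ≤ k then 2 * j else n - 2 * j)) := by
        intro j hj
        rw [Finset.mem_Icc] at hj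
        obtain ⟨u, hu⟩ := hQd j
        have step1 : (Ideal.Quotient.mk I) (Qr j ^ 2) = (Ideal.Quotient.mk I) (Qr (2 * j)) := by
          rw [Ideal.Quotient.mk_eq_mk_iff_sub_mem, hI, Ideal.mem_span_singleton']
          exact ⟨u, by rw [hu]; ring⟩
        rw [step1]
        congr 1
        split_ifs with hsp
        · rfl
        · exact (hQsym (2 * j) (by omega) (by omega)).symm
      have c3 : ∏ j ∈ Finset.Icc 1 k, (Ideal.Quotient.mk I)
            (Qr (if 2 * j ≤ k then 2 * j else n - 2 * j)) =
          ∏ j ∈ Finset.Icc 1 k, (Ideal.Quotient.mk I) (Qr j) := by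
        apply Finset.prod_nbij' (fun j => if 2 * j ≤ k then 2 * j else n - 2 * j)
          (fun j => if j % 2 = 0 then j / 2 else (n - j) / 2)
        · intro a haa; rw [Finset.mem_Icc] at *; split_ifs <;> omega
        · intro a haa; rw [Finset.mem_Icc] at *; split_ifs <;> omega
        · intro a haa; rw [Finset.mem_Icc] at haa; split_ifs <;> omega
        · intro a haa; rw [Finset.mem_Icc] at haa; split_ifs <;> omega
        · intro a haa; rfl
      rw [c1, Finset.prod_congr rfl c2, c3, hm, map_prod]
    rw [Ideal.Quotient.mk_eq_mk_iff_sub_mem, hI, Ideal.mem_span_singleton'] at hπ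
    obtain ⟨u, hu⟩ := hπ
    exact ⟨u, by linear_combination -hu⟩
  -- complex-level symmetry and product factorization
  have hQcsym : ∀ a : ℕ, 1 ≤ a → a ≤ n - 1 → Qc (n - a) = Qc a := by
    intro a h1 h2
    rw [← hQcoe, ← hQcoe, hQsym a h1 h2]
  have hsplit : ∏ j ∈ Finset.range n, Qc j = Qc 0 * (∏ j ∈ Finset.Icc 1 k, Qc j) ^ 2 := by
    have h0 : (0:ℕ) ∈ Finset.range n := by simp [hpos]
    rw [Finset.prod_eq_mul_prod_sdiff_singleton_of_mem h0]
    congr 1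
    have hset : Finset.range n \ {0} = Finset.Ico 1 n := by
      ext a; simp [Finset.mem_Ico]; omega
    rw [hset]
    have hsplit2 : (∏ j ∈ Finset.Ico 1 (k+1), Qc j) * ∏ j ∈ Finset.Ico (k+1) n, Qc j
        = ∏ j ∈ Finset.Ico 1 n, Qc j := Finset.prod_Ico_consecutive _ (by omega) (by omega)
    have hrefl : ∏ j ∈ Finset.Ico (k+1) n, Qc j = ∏ j ∈ Finset.Ico 1 (k+1), Qc j := by
      apply Finset.prod_nbij' (fun j => n - j) (fun j => n - j)
      · intro a haa; rw [Finset.mem_Ico] at *; omega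
      · intro a haa; rw [Finset.mem_Ico] at *; omega
      · intro a haa; rw [Finset.mem_Ico] at haa; omega
      · intro a haa; rw [Finset.mem_Ico] at haa; omega
      · intro a haa; rw [Finset.mem_Ico] at haa
        exact (hQcsym a (by omega) (by omega)).symm
    rw [← hsplit2, hrefl, Finset.Ico_add_one_right_eq_Icc, sq]
  have hmcoe : (m : ℂ) = ∏ j ∈ Finset.Icc 1 k, Qc j := by
    show R.val m = _
    rw [hm, map_prod]
    exact Finset.prod_congr rfl (fun j _ => hQcoe j)
  set c : ℤ := (f.eval 1) ^ 2 - (g.eval 1) ^ 2 with hc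
  have hQc0 : Qc 0 = (c : ℂ) := by
    simp only [hQc, pow_zero, inv_one, Polynomial.aeval_def, Polynomial.eval₂_at_one,
      algebraMap_int_eq, eq_intCast]
    push_cast [hc]
    ring
  have hDfac : (D : ℂ) = (c : ℂ) * (m : ℂ) ^ 2 := by
    rw [← hD', hsplit, hQc0, ← hmcoe]
  -- generic finish
  have hfin : ∀ t : R, (D : ℂ) = 4 * (t : ℂ) → 4 ∣ D := by
    intro t ht
    have hti : IsIntegral ℤ (t : ℂ) := t.2
    set q : ℚ := (D : ℚ) / 4 with hq
    have hqe : (algebraMap ℚ ℂ) q = (t : ℂ) := by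
      rw [eq_ratCast (algebraMap ℚ ℂ) q, hq]
      push_cast
      rw [ht]; ring
    have hqint : IsIntegral ℤ q := by
      rw [← isIntegral_algebraMap_iff (algebraMap ℚ ℂ).injective, hqe]
      exact hti
    obtain ⟨y, hy⟩ := IsIntegrallyClosed.isIntegral_iff.mp hqint
    rw [eq_intCast] at hy
    refine ⟨y, ?_⟩
    have hyD : (D : ℚ) = ((4 * y : ℤ) : ℚ) := by
      push_cast
      rw [hy, hq]
      ring
    exact_mod_cast hyD
  by_cases hcd : (2:ℤ) ∣ c
  · -- 4 ∣ c
    have hfac : c = (f.eval 1 - g.eval 1) * (f.eval 1 + g.eval 1) := by rw [hc]; ring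
    have h4c : (4:ℤ) ∣ c := by
      rw [hfac] at hcd ⊢
      have hdd : (2:ℤ) ∣ (f.eval 1 - g.eval 1) ∧ (2:ℤ) ∣ (f.eval 1 + g.eval 1) := by
        rcases Int.prime_two.2.2 _ _ hcd with h | h
        · exact ⟨h, by obtain ⟨w, hw⟩ := h; exact ⟨w + g.eval 1, by linarith⟩⟩
        · exact ⟨by obtain ⟨w, hw⟩ := h; exact ⟨w - g.eval 1, by linarith⟩, h⟩
      have := mul_dvd_mul hdd.1 hdd.2
      norm_num at this
      exact this
    obtain ⟨c', hc'⟩ := h4c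
    apply hfin ((c' : R) * m ^ 2)
    rw [hDfac, hc']
    push_cast
    ring
  · obtain ⟨d, hd⟩ := h2
    obtain ⟨x, y, hxy⟩ : ∃ x y : ℤ, c * x + 2 * y = 1 := ⟨1, -(c/2), by omega⟩
    have hcm : (c : R) * m ^ 2 = 2 * (d : R) := by
      apply Subtype.coe_injective
      show (c : ℂ) * (m : ℂ) ^ 2 = 2 * (d : ℂ)
      rw [← hDfac, hd]
      push_cast
      ring
    obtain ⟨u, hu⟩ := hmcong
    have hone : (c : R) * (x : R) + 2 * (y : R) = 1 := by
      have := congrArg (fun z : ℤ => (z : R)) hxy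
      push_cast at this
      exact this
    have hm2 : m = 2 * ((x : R) * (d : R) + (y : R) * m ^ 2 - u) := by
      linear_combination -hu + (x : R) * hcm - m ^ 2 * hone
    apply hfin ((c : R) * ((x : R) * (d : R) + (y : R) * m ^ 2 - u) ^ 2)
    have hmc2 : (m : ℂ) = 2 * (((x : R) * (d : R) + (y : R) * m ^ 2 - u : R) : ℂ) :=
      congrArg Subtype.val hm2
    rw [hDfac, hmc2]
    show _ = 4 * ((c : ℂ) * ((((x : R) * (d : R) + (y : R) * m ^ 2 - u : R)) : ℂ) ^ 2)
    ring
end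

section
/- For the dihedral group D_{2n} with n = 3m and m odd, λ(D_{2n}) = 4. -/
set_option linter.unusedSectionVars false
set_option maxHeartbeats 1000000

open Matrix

namespace Stmt11

variable {R : Type*} [CommRing R]

/-- `iot k = k+1` in `ZMod n`, enumerating the "positive half" `{1, ..., h}`. -/
def iot {n h : ℕ} (k : Fin h) : ZMod n := (((k : ℕ) + 1 : ℕ) : ZMod n)

section iotlemmas

variable {n h : ℕ} [NeZero n] (hn2 : n = 2 * h + 1)

theorem natCast_inj_of_lt {a b : ℕ} (ha : a < n) (hb : b < n)
    (hab : (a : ZMod n) = (b : ZMod n)) : a = b := by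
  have := congrArg ZMod.val hab
  rwa [ZMod.val_cast_of_lt ha, ZMod.val_cast_of_lt hb] at this

include hn2

theorem iot_lt (k : Fin h) : (k : ℕ) + 1 < n := by have := k.is_lt; omega

theorem iot_inj {k j : Fin h} (hkj : (iot k : ZMod n) = iot j) : k = j := by
  have := natCast_inj_of_lt (iot_lt hn2 k) (iot_lt hn2 j) hkj
  exact Fin.ext (by omega)

theorem iot_ne_zero (k : Fin h) : (iot k : ZMod n) ≠ 0 := by
  intro hk
  rw [iot, ZMod.natCast_eq_zero_iff] at hk
  have h2 := Nat.le_of_dvd (by omega) hk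
  have := k.is_lt
  omega

theorem iot_ne_neg (k j : Fin h) : (iot k : ZMod n) ≠ -iot j := by
  intro hk
  have h0 : ((((k : ℕ) + 1) + ((j : ℕ) + 1) : ℕ) : ZMod n) = 0 := by
    have : (iot k : ZMod n) + iot j = 0 := by rw [hk]; ring
    rw [iot, iot] at this
    push_cast
    push_cast at this
    linear_combination this
  rw [ZMod.natCast_eq_zero_iff] at h0
  have h2 := Nat.le_of_dvd (by omega) h0
  have hk1 := k.is_lt; have hj1 := j.is_lt
  omega

/-- The partition map `Unit ⊕ Fin h ⊕ Fin h → ZMod n`. -/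
def EE {n h : ℕ} : Unit ⊕ Fin h ⊕ Fin h → ZMod n :=
  Sum.elim (fun _ => 0) (Sum.elim (fun k => iot k) fun k => -iot k)

theorem EE_bij : Function.Bijective (EE : Unit ⊕ Fin h ⊕ Fin h → ZMod n) := by
  rw [Fintype.bijective_iff_injective_and_card]
  constructor
  · rintro (u | k | k) (v | j | j) hkj <;>
      simp only [EE, Sum.elim_inl, Sum.elim_inr] at hkj
    · rfl
    · exact absurd hkj.symm (iot_ne_zero hn2 j)
    · exact absurd (neg_eq_zero.mp hkj.symm) (iot_ne_zero hn2 j)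
    · exact absurd hkj (iot_ne_zero hn2 k)
    · rw [iot_inj hn2 hkj]
    · exact absurd hkj (iot_ne_neg hn2 k j)
    · exact absurd (neg_eq_zero.mp hkj) (iot_ne_zero hn2 k)
    · exact absurd hkj.symm (iot_ne_neg hn2 j k)
    · rw [iot_inj hn2 (neg_injective hkj)]
  · simp [ZMod.card, hn2]; omega

/-- Partition sum lemma. -/
theorem sum_partition {M : Type*} [AddCommMonoid M] (F : ZMod n → M) :
    ∑ t : ZMod n, F t = F 0 + ((∑ k : Fin h, F (iot k)) + ∑ k : Fin h, F (-iot k)) := by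
  rw [← Fintype.sum_bijective EE (EE_bij hn2) (fun x => F (EE x)) F (fun x => rfl)]
  rw [Fintype.sum_sum_type, Fintype.sum_sum_type]
  simp [EE]

end iotlemmas

section qlemmas

variable {R : Type*} [CommRing R] {n h : ℕ} [NeZero n] (hn2 : n = 2 * h + 1)

/-- signed indicator of the pair `{iot k, -iot k}`. -/
def qq (t : ZMod n) (k : Fin h) : R :=
  (if t = iot k then 1 else 0) - (if t = -iot k then 1 else 0)

theorem qq_neg (t : ZMod n) (k : Fin h) : (qq (-t) k : R) = -qq t k := by
  unfold qq
  simp only [neg_eq_iff_eq_neg, neg_inj]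
  ring_nf

include hn2

theorem qq_zero (k : Fin h) : (qq (0 : ZMod n) k : R) = 0 := by
  rw [qq, if_neg (fun hc => iot_ne_zero hn2 k hc.symm),
    if_neg (fun hc => iot_ne_zero hn2 k (neg_eq_zero.mp hc.symm)), sub_zero]

theorem qq_iot (k₀ k : Fin h) : (qq ((iot k₀ : ZMod n)) k : R) = if k = k₀ then 1 else 0 := by
  rw [qq, if_neg (iot_ne_neg hn2 k₀ k)]
  by_cases hk : k = k₀
  · subst hk; simp
  · rw [if_neg (fun hc => hk (iot_inj hn2 hc).symm), if_neg hk, sub_zero]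

theorem qq_neg_iot (k₀ k : Fin h) : (qq (-(iot k₀ : ZMod n)) k : R) = if k = k₀ then -1 else 0 := by
  rw [qq_neg, qq_iot hn2]
  split <;> ring

/-- The key evaluation lemma: for an odd function `g`,
`∑ k, qq t k * g (iot k) = g t`. -/
theorem keyA (g : ZMod n → R) (hg0 : g 0 = 0) (hg : ∀ t, g (-t) = -g t) (t : ZMod n) :
    ∑ k : Fin h, qq t k * g (iot k) = g t := by
  obtain ⟨x, rfl⟩ := (EE_bij hn2).surjective t
  rcases x with u | k₀ | k₀ <;> simp only [EE, Sum.elim_inl, Sum.elim_inr]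
  · simp only [qq_zero hn2, zero_mul, Finset.sum_const_zero, hg0]
  · simp only [qq_iot hn2, ite_mul, one_mul, zero_mul]
    rw [Finset.sum_ite_eq' Finset.univ k₀ (fun k => g (iot k))]
    simp
  · simp only [qq_neg_iot hn2, ite_mul, neg_one_mul, zero_mul]
    rw [Finset.sum_ite_eq' Finset.univ k₀ (fun k => -g (iot k))]
    simp [hg]

/-- helper sum: `∑ j', c (i - j') * qq j' j = c (i - iot j) - c (i + iot j)`. -/
theorem sum_c_qq (c : ZMod n → R) (i : ZMod n) (j : Fin h) :
    ∑ j' : ZMod n, c (i - j') * qq j' j = c (i - iot j) - c (i + iot j) := by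
  simp only [qq, mul_sub, mul_ite, mul_one, mul_zero]
  rw [Finset.sum_sub_distrib]
  rw [Finset.sum_ite_eq' Finset.univ (iot j) (fun j' => c (i - j')),
    Finset.sum_ite_eq' Finset.univ (-iot j) (fun j' => c (i - j'))]
  simp [sub_neg_eq_add]

end qlemmas

section matrices

variable {R : Type*} [CommRing R] {n h : ℕ} [NeZero n]

/-- the "minus part" of a symmetric circulant. -/
def Cm (c : ZMod n → R) : Matrix (Fin h) (Fin h) R :=
  of fun k j => c (iot k - iot j) - c (iot k + iot j)

def P1 : Matrix (ZMod n) Unit R := of fun _ _ => 1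

def P2 : Matrix (ZMod n) (Fin h) R := of fun i k => qq (i - 1) k - qq (i + 1) k

def P3 : Matrix (ZMod n) (Fin h) R := of fun i k => qq i k

/-- the base-change matrix. -/
def Pm : Matrix (ZMod n) (Unit ⊕ Fin h ⊕ Fin h) R := fromCols P1 (fromCols P2 P3)

def Gm (c : ZMod n → R) : Matrix Unit Unit R := of fun _ _ => ∑ t, c t

/-- the block-diagonalized form. -/
def Dm (c : ZMod n → R) : Matrix (Unit ⊕ Fin h ⊕ Fin h) (Unit ⊕ Fin h ⊕ Fin h) R :=
  fromBlocks (Gm c) 0 0 (fromBlocks (Cm c) 0 0 (Cm c))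

theorem sum_shift (c : ZMod n → R) (i : ZMod n) :
    ∑ j' : ZMod n, c (i - j') = ∑ t : ZMod n, c t :=
  Fintype.sum_equiv (Equiv.subLeft i) _ _ fun _ => rfl

variable (hn2 : n = 2 * h + 1)
include hn2

theorem sum_c_qq_shift (c : ZMod n → R) (i s : ZMod n) (j : Fin h) :
    ∑ j' : ZMod n, c (i - j') * qq (j' + s) j
      = c ((i + s) - iot j) - c ((i + s) + iot j) := by
  rw [← sum_c_qq hn2 c (i + s) j]
  apply Fintype.sum_equiv (Equiv.addRight s)
  intro u
  simp only [Equiv.coe_addRight]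
  rw [show (i + s - (u + s) : ZMod n) = i - u by ring]

theorem CP_PD (c : ZMod n → R) (hc : ∀ t, c (-t) = c t) :
    circulant c * (Pm : Matrix (ZMod n) (Unit ⊕ Fin h ⊕ Fin h) R) = Pm (R := R) (h := h) * Dm (h := h) c := by
  have hg0 : ∀ j : Fin h, c ((0 : ZMod n) - iot j) - c (0 + iot j) = 0 := fun j => by
    rw [zero_sub, zero_add, hc]; ring
  have hgneg : ∀ (j : Fin h) (t : ZMod n),
      c (-t - iot j) - c (-t + iot j) = -(c (t - iot j) - c (t + iot j)) := fun j t => by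
    rw [show (-t - iot j : ZMod n) = -(t + iot j) by ring,
      show (-t + iot j : ZMod n) = -(t - iot j) by ring, hc, hc]
    ring
  have keyA' : ∀ (j : Fin h) (t : ZMod n),
      ∑ k : Fin h, qq t k * (c (iot k - iot j) - c (iot k + iot j))
        = c (t - iot j) - c (t + iot j) :=
    fun j t => keyA hn2 (fun t => c (t - iot j) - c (t + iot j)) (hg0 j) (hgneg j) t
  have I1 : circulant c * (P1 : Matrix (ZMod n) Unit R) = P1 (R := R) * Gm c := by
    ext i u
    rw [mul_apply, mul_apply,
      Fintype.sum_unique (fun u' : Unit => (P1 i u' * Gm c u' u : R))]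
    simp only [P1, Gm, of_apply, circulant_apply, mul_one, one_mul]
    exact sum_shift c i
  have I3 : circulant c * (P3 : Matrix (ZMod n) (Fin h) R) = P3 (R := R) (h := h) * Cm (h := h) c := by
    ext i k
    rw [mul_apply, mul_apply]
    simp only [P3, Cm, of_apply, circulant_apply]
    rw [sum_c_qq hn2 c i k]
    exact (keyA' k i).symm
  have I2 : circulant c * (P2 : Matrix (ZMod n) (Fin h) R) = P2 (R := R) (h := h) * Cm (h := h) c := by
    ext i k
    rw [mul_apply, mul_apply]
    simp only [P2, Cm, of_apply, circulant_apply]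
    have l1 : ∑ j' : ZMod n, c (i - j') * qq (j' - 1) k
        = c ((i - 1) - iot k) - c ((i - 1) + iot k) := by
      have h0 := sum_c_qq_shift hn2 c i (-1) k
      simpa only [← sub_eq_add_neg] using h0
    have l2 : ∑ j' : ZMod n, c (i - j') * qq (j' + 1) k
        = c ((i + 1) - iot k) - c ((i + 1) + iot k) := sum_c_qq_shift hn2 c i 1 k
    have lhs : ∑ j' : ZMod n, c (i - j') * (qq (j' - 1) k - qq (j' + 1) k)
        = (c (i - 1 - iot k) - c (i - 1 + iot k)) - (c (i + 1 - iot k) - c (i + 1 + iot k)) := by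
      simp only [mul_sub]
      rw [Finset.sum_sub_distrib, l1, l2]
    have rhs : ∑ x : Fin h, (qq (i - 1) x - qq (i + 1) x) * (c (iot x - iot k) - c (iot x + iot k))
        = (c (i - 1 - iot k) - c (i - 1 + iot k)) - (c (i + 1 - iot k) - c (i + 1 + iot k)) := by
      simp only [sub_mul]
      rw [Finset.sum_sub_distrib, keyA' k (i - 1), keyA' k (i + 1)]
    rw [lhs, rhs]
  rw [Pm, Dm]
  rw [mul_fromCols, mul_fromCols]
  rw [fromCols_mul_fromBlocks]
  rw [fromCols_mul_fromBlocks]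
  rw [I1, I2, I3]
  simp only [Matrix.mul_zero, Matrix.zero_mul, add_zero, zero_add]

omit hn2 in
theorem det_Dm (c : ZMod n → R) :
    (Dm (h := h) c).det = (∑ t, c t) * ((Cm (h := h) c).det * (Cm (h := h) c).det) := by
  rw [Dm, det_fromBlocks_zero₂₁, det_fromBlocks_zero₂₁, det_unique]
  simp [Gm]

theorem det_Pm_ne_zero :
    ((Pm : Matrix (ZMod n) (Unit ⊕ Fin h ⊕ Fin h) ℤ).submatrix (⇑(Equiv.ofBijective EE (EE_bij hn2))) id).det ≠ 0 := by
  intro hdet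
  obtain ⟨v, hv0, hv⟩ := Matrix.exists_mulVec_eq_zero_iff.mpr hdet
  set e0 := Equiv.ofBijective EE (EE_bij hn2) with he0
  set α : ℤ := v (Sum.inl ()) with hα
  set uβ : ZMod n → ℤ := fun t => ∑ k, qq t k * v (Sum.inr (Sum.inl k)) with huβ
  set uγ : ZMod n → ℤ := fun t => ∑ k, qq t k * v (Sum.inr (Sum.inr k)) with huγ
  have hu0 : ∀ w : Fin h → ℤ, (∑ k, qq (0 : ZMod n) k * w k) = 0 := fun w => by
    simp [qq_zero hn2]
  have huneg : ∀ (w : Fin h → ℤ) (t : ZMod n),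
      (∑ k, qq (-t) k * w k) = -∑ k, qq t k * w k := fun w t => by
    rw [← Finset.sum_neg_distrib]
    exact Finset.sum_congr rfl fun k _ => by rw [qq_neg, neg_mul]
  have huiot : ∀ (w : Fin h → ℤ) (k₀ : Fin h), (∑ k, qq (iot k₀ : ZMod n) k * w k) = w k₀ :=
    fun w k₀ => by
      simp only [qq_iot hn2, ite_mul, one_mul, zero_mul]
      rw [Finset.sum_ite_eq' Finset.univ k₀ w]
      simp
  have uβneg : ∀ t, uβ (-t) = -uβ t := fun t => huneg _ t
  have uγneg : ∀ t, uγ (-t) = -uγ t := fun t => huneg _ t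
  have uβ0 : uβ 0 = 0 := hu0 _
  have main : ∀ i : ZMod n, α + (uβ (i - 1) - uβ (i + 1)) + uγ i = 0 := by
    intro i
    have h0 := congrFun hv (e0.symm i)
    simp only [Matrix.mulVec, dotProduct, Matrix.submatrix_apply, id_eq,
      Equiv.apply_symm_apply, Pi.zero_apply] at h0
    rw [Fintype.sum_sum_type, Fintype.sum_sum_type, Fintype.sum_unique] at h0
    simp only [Pm, fromCols_apply_inl, fromCols_apply_inr, P1, P2, P3, of_apply,
      one_mul, sub_mul] at h0
    rw [Finset.sum_sub_distrib] at h0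
    rw [show v (Sum.inl default) = α from rfl,
      (rfl : (∑ x : Fin h, qq (i - 1) x * v (Sum.inr (Sum.inl x))) = uβ (i - 1)),
      (rfl : (∑ x : Fin h, qq (i + 1) x * v (Sum.inr (Sum.inl x))) = uβ (i + 1)),
      (rfl : (∑ x : Fin h, qq i x * v (Sum.inr (Sum.inr x))) = uγ i)] at h0
    linarith [h0]
  have hγ : ∀ i : ZMod n, uγ i = 0 := by
    intro i
    have e1 := main i
    have e2 := main (-i)
    rw [show (-i - 1 : ZMod n) = -(i + 1) by ring, show (-i + 1 : ZMod n) = -(i - 1) by ring,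
      uβneg, uβneg, uγneg] at e2
    linarith
  have hα0 : α = 0 := by
    have S : ∑ i : ZMod n, (α + (uβ (i - 1) - uβ (i + 1)) + uγ i) = 0 :=
      Finset.sum_eq_zero fun i _ => main i
    rw [Finset.sum_add_distrib, Finset.sum_add_distrib, Finset.sum_sub_distrib] at S
    have r1 : ∑ i : ZMod n, uβ (i - 1) = ∑ t : ZMod n, uβ t :=
      Fintype.sum_equiv (Equiv.subRight 1) _ _ fun _ => rfl
    have r2 : ∑ i : ZMod n, uβ (i + 1) = ∑ t : ZMod n, uβ t :=
      Fintype.sum_equiv (Equiv.addRight 1) _ _ fun _ => rfl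
    have r3 : ∑ i : ZMod n, uγ i = 0 := Finset.sum_eq_zero fun i _ => hγ i
    rw [r1, r2, r3, Finset.sum_const, Finset.card_univ, ZMod.card, nsmul_eq_mul] at S
    have hn0 : (n : ℤ) ≠ 0 := Int.natCast_ne_zero.mpr (NeZero.ne n)
    have : (n : ℤ) * α = 0 := by linarith
    rcases mul_eq_zero.mp this with hcon | hok
    · exact absurd hcon hn0
    · exact hok
  have hβstep : ∀ j : ZMod n, uβ (j + 2) = uβ j := by
    intro j
    have e1 := main (j + 1)
    rw [hγ, hα0, show (j + 1 - 1 : ZMod n) = j by ring, show (j + 1 + 1 : ZMod n) = j + 2 by ring]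
      at e1
    linarith
  have hβ2t : ∀ t : ℕ, uβ ((2 * t : ℕ) : ZMod n) = 0 := by
    intro t
    induction t with
    | zero => simpa using uβ0
    | succ t ih =>
        have hcast : ((2 * (t + 1) : ℕ) : ZMod n) = ((2 * t : ℕ) : ZMod n) + 2 := by
          push_cast; ring
        rw [hcast, hβstep]
        exact ih
  have hβall : ∀ j : ZMod n, uβ j = 0 := by
    intro j
    have hj : ((2 * ((h + 1) * j.val) : ℕ) : ZMod n) = j := by
      have h21 : 2 * (h + 1) = n + 1 := by omega
      have hnn : (2 * ((h + 1) * j.val) : ℕ) = (n + 1) * j.val := by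
        rw [← h21]; ring
      rw [hnn]
      push_cast
      rw [ZMod.natCast_self]
      simp [ZMod.natCast_val, ZMod.cast_id]
    rw [← hj]
    exact hβ2t _
  apply hv0
  funext x
  rcases x with u | k | k
  · cases u; exact hα0
  · have := huiot (fun k => v (Sum.inr (Sum.inl k))) k
    rw [show (∑ k', qq (iot k : ZMod n) k' * v (Sum.inr (Sum.inl k'))) = uβ (iot k) from rfl]
      at this
    rw [hβall] at this
    exact this.symm
  · have := huiot (fun k => v (Sum.inr (Sum.inr k))) k
    rw [show (∑ k', qq (iot k : ZMod n) k' * v (Sum.inr (Sum.inr k'))) = uγ (iot k) from rfl]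
      at this
    rw [hγ] at this
    exact this.symm

theorem det_circulant_factor (c : ZMod n → ℤ) (hc : ∀ t, c (-t) = c t) :
    (circulant c).det = (∑ t, c t) * ((Cm (h := h) c).det) ^ 2 := by
  have key := CP_PD hn2 c hc
  have e1 : (circulant c).submatrix (⇑(Equiv.ofBijective EE (EE_bij hn2)))
        (⇑(Equiv.ofBijective EE (EE_bij hn2)))
        * (Pm (R := ℤ)).submatrix (⇑(Equiv.ofBijective EE (EE_bij hn2))) id
      = (Pm (R := ℤ)).submatrix (⇑(Equiv.ofBijective EE (EE_bij hn2))) id * Dm (h := h) c := by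
    rw [submatrix_mul_equiv (circulant c) Pm _ (Equiv.ofBijective EE (EE_bij hn2)) id, key,
      ← submatrix_mul_equiv (Pm (R := ℤ)) (Dm c) _ (Equiv.refl _) id]
    simp
  have e2 := congrArg det e1
  rw [det_mul, det_mul, det_submatrix_equiv_self] at e2
  have e3 := mul_right_cancel₀ (det_Pm_ne_zero hn2)
    (e2.trans (mul_comm _ ((Dm c).det)))
  rw [e3, det_Dm]
  ring

end matrices

section dihedral

variable {n h : ℕ} [NeZero n]

/-- sum-type model of the dihedral group. -/
def e2 {n : ℕ} : ZMod n ⊕ ZMod n ≃ DihedralGroup n where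
  toFun := Sum.elim DihedralGroup.r DihedralGroup.sr
  invFun g := match g with
    | .r i => Sum.inl i
    | .sr i => Sum.inr i
  left_inv := by rintro (i | i) <;> rfl
  right_inv := by rintro (i | i) <;> rfl

theorem rr_inv (i j : ZMod n) : DihedralGroup.r i * (DihedralGroup.r j)⁻¹
    = DihedralGroup.r (i - j) := by
  rw [mul_inv_eq_iff_eq_mul, DihedralGroup.r_mul_r, sub_add_cancel]

theorem rsr_inv (i j : ZMod n) : DihedralGroup.r i * (DihedralGroup.sr j)⁻¹
    = DihedralGroup.sr (j - i) := by
  rw [mul_inv_eq_iff_eq_mul, DihedralGroup.sr_mul_sr]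
  congr 1
  ring

theorem srr_inv (i j : ZMod n) : DihedralGroup.sr i * (DihedralGroup.r j)⁻¹
    = DihedralGroup.sr (i - j) := by
  rw [mul_inv_eq_iff_eq_mul, DihedralGroup.sr_mul_r, sub_add_cancel]

theorem srsr_inv (i j : ZMod n) : DihedralGroup.sr i * (DihedralGroup.sr j)⁻¹
    = DihedralGroup.r (j - i) := by
  rw [mul_inv_eq_iff_eq_mul, DihedralGroup.r_mul_sr]
  congr 1
  ring

variable (x : DihedralGroup n → ℤ)

def av : ZMod n → ℤ := fun i => x (.r i)

def bv : ZMod n → ℤ := fun i => x (.sr i)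

/-- symmetrized autocorrelation. -/
def sconv (f : ZMod n → ℤ) (k : ZMod n) : ℤ := ∑ u, f (u - k) * f u

def cv : ZMod n → ℤ := fun k => sconv (av x) k - sconv (bv x) k

theorem sconv_neg (f : ZMod n → ℤ) (k : ZMod n) : sconv f (-k) = sconv f k := by
  unfold sconv
  apply Fintype.sum_equiv (Equiv.addRight k)
  intro u
  simp only [Equiv.coe_addRight]
  rw [show (u - -k : ZMod n) = u + k by ring, show (u + k - k : ZMod n) = u by ring]
  ring

theorem cv_symm (k : ZMod n) : cv x (-k) = cv x k := by
  unfold cv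
  rw [sconv_neg, sconv_neg]

theorem sum_sconv (f : ZMod n → ℤ) : ∑ k, sconv f k = (∑ t, f t) ^ 2 := by
  unfold sconv
  rw [Finset.sum_comm]
  have step : ∀ u : ZMod n, ∑ k : ZMod n, f (u - k) * f u = (∑ t, f t) * f u := by
    intro u
    rw [← Finset.sum_mul]
    rw [sum_shift f u]
  rw [Finset.sum_congr rfl fun u _ => step u, ← Finset.mul_sum]
  ring

theorem sum_cv : ∑ k, cv x k = (∑ t, av x t) ^ 2 - (∑ t, bv x t) ^ 2 := by
  unfold cv
  rw [Finset.sum_sub_distrib, sum_sconv, sum_sconv]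

theorem conv1 (f : ZMod n → ℤ) (i j : ZMod n) :
    ∑ t, f (i - t) * f (j - t) = sconv f (i - j) := by
  unfold sconv
  apply Fintype.sum_equiv (Equiv.subLeft i)
  intro t
  simp only [Equiv.subLeft_apply]
  rw [show (i - t - (i - j) : ZMod n) = j - t by ring]
  ring

theorem conv2 (f : ZMod n → ℤ) (i j : ZMod n) :
    ∑ t, f (t - i) * f (t - j) = sconv f (i - j) := by
  unfold sconv
  apply Fintype.sum_equiv (Equiv.subRight j)
  intro t
  simp only [Equiv.subRight_apply]
  rw [show (t - j - (i - j) : ZMod n) = t - i by ring]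

theorem M_reindex :
    (Matrix.of fun i j : DihedralGroup n => x (i * j⁻¹)).submatrix ⇑e2 ⇑e2
      = fromBlocks (circulant (av x)) (circulant (bv x))ᵀ
          (circulant (bv x)) (circulant (av x))ᵀ := by
  ext i j
  rcases i with i | i <;> rcases j with j | j <;>
    simp only [Matrix.submatrix_apply, of_apply, e2, Equiv.coe_fn_mk, Sum.elim_inl, Sum.elim_inr,
      fromBlocks_apply₁₁, fromBlocks_apply₁₂, fromBlocks_apply₂₁, fromBlocks_apply₂₂,
      transpose_apply, circulant_apply, rr_inv, rsr_inv, srr_inv, srsr_inv, av, bv]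

theorem NA : circulant (av x) * (circulant (av x))ᵀ - (circulant (bv x))ᵀ * circulant (bv x)
    = circulant (cv x) := by
  ext i j
  rw [Matrix.sub_apply, mul_apply, mul_apply, circulant_apply]
  have l1 : ∑ t, circulant (av x) i t * (circulant (av x))ᵀ t j = sconv (av x) (i - j) := by
    simp only [transpose_apply, circulant_apply]
    exact conv1 (av x) i j
  have l2 : ∑ t, (circulant (bv x))ᵀ i t * circulant (bv x) t j = sconv (bv x) (i - j) := by
    simp only [transpose_apply, circulant_apply]
    exact conv2 (bv x) i j
  rw [l1, l2]
  rfl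

theorem NB : (circulant (av x))ᵀ * circulant (av x) - circulant (bv x) * (circulant (bv x))ᵀ
    = circulant (cv x) := by
  ext i j
  rw [Matrix.sub_apply, mul_apply, mul_apply, circulant_apply]
  have l1 : ∑ t, (circulant (av x))ᵀ i t * circulant (av x) t j = sconv (av x) (i - j) := by
    simp only [transpose_apply, circulant_apply]
    exact conv2 (av x) i j
  have l2 : ∑ t, circulant (bv x) i t * (circulant (bv x))ᵀ t j = sconv (bv x) (i - j) := by
    simp only [transpose_apply, circulant_apply]
    exact conv1 (bv x) i j
  rw [l1, l2]
  rfl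

theorem abs_det_eq :
    |(Matrix.of fun i j : DihedralGroup n => x (i * j⁻¹)).det| = |(circulant (cv x)).det| := by
  set A := circulant (av x) with hA
  set B := circulant (bv x) with hB
  set N := circulant (cv x) with hN
  have hAB : A * Bᵀ = Bᵀ * A := by
    rw [hA, hB, transpose_circulant, circulant_mul_comm]
  have hBA : B * Aᵀ = Aᵀ * B := by
    rw [hA, hB, transpose_circulant, circulant_mul_comm]
  set M1 := fromBlocks A Bᵀ B Aᵀ with hM1
  set M2 := fromBlocks Aᵀ (-Bᵀ) (-B) A with hM2
  have hM : (Matrix.of fun i j : DihedralGroup n => x (i * j⁻¹)).det = M1.det := by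
    rw [← det_submatrix_equiv_self e2, M_reindex]
  have hprod : M1 * M2 = fromBlocks N 0 0 N := by
    rw [hM1, hM2, fromBlocks_multiply]
    have tl : A * Aᵀ + Bᵀ * -B = N := by
      rw [Matrix.mul_neg, ← sub_eq_add_neg]; exact NA x
    have tr : A * -Bᵀ + Bᵀ * A = 0 := by
      rw [Matrix.mul_neg, hAB, neg_add_cancel]
    have bl : B * Aᵀ + Aᵀ * -B = 0 := by
      rw [Matrix.mul_neg, hBA, add_neg_cancel]
    have br : B * -Bᵀ + Aᵀ * A = N := by
      rw [Matrix.mul_neg, neg_add_eq_sub]; exact NB x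
    rw [tl, tr, bl, br]
  have hdetM2 : M2.det = M1.det := by
    set J : Matrix (ZMod n ⊕ ZMod n) (ZMod n ⊕ ZMod n) ℤ := fromBlocks 1 0 0 (-1) with hJ
    have hJtr : J * M1ᵀ * J = M2 := by
      rw [hJ, hM1, hM2, fromBlocks_transpose, fromBlocks_multiply, fromBlocks_multiply]
      simp only [Matrix.one_mul, Matrix.zero_mul, Matrix.mul_one, Matrix.mul_zero,
        add_zero, zero_add, Matrix.neg_mul, Matrix.mul_neg, neg_neg, transpose_transpose,
        neg_zero]
    have hJJ : J * J = 1 := by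
      rw [hJ, fromBlocks_multiply]
      simp only [Matrix.one_mul, Matrix.zero_mul, Matrix.mul_one, Matrix.mul_zero,
        add_zero, zero_add, Matrix.neg_mul, neg_neg, Matrix.mul_neg, neg_zero]
      exact fromBlocks_one
    have e1 := congrArg det hJtr
    rw [det_mul, det_mul, det_transpose] at e1
    have e2' := congrArg det hJJ
    rw [det_mul, det_one] at e2'
    calc M2.det = J.det * M1.det * J.det := e1.symm
      _ = M1.det * (J.det * J.det) := by ring
      _ = M1.det := by rw [e2', mul_one]
  have hsq : M1.det ^ 2 = N.det ^ 2 := by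
    have := congrArg det hprod
    rw [det_mul, det_fromBlocks_zero₂₁] at this
    calc M1.det ^ 2 = M1.det * M2.det := by rw [hdetM2]; ring
      _ = N.det * N.det := this
      _ = N.det ^ 2 := by ring
  rw [hM]
  exact (sq_eq_sq_iff_abs_eq_abs _ _).mp hsq

end dihedral

section modthree

variable {n h : ℕ} [NeZero n] (hn2 : n = 2 * h + 1)
include hn2

theorem three_dvd_s (h3n : 3 ∣ n) (c : ZMod n → ℤ) (hc : ∀ t, c (-t) = c t)
    (hγ : (3 : ℤ) ∣ ∑ t, c t) : (3 : ℤ) ∣ (Cm (h := h) c).det := by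
  have hpos : 0 < h := by
    have := Nat.le_of_dvd (Nat.pos_of_ne_zero (NeZero.ne n)) h3n
    omega
  set W := ZMod.castHom h3n (ZMod 3) with hW
  set c3 : ZMod n → ZMod 3 := fun t => ((c t : ℤ) : ZMod 3) with hc3
  have hc3sym : ∀ t, c3 (-t) = c3 t := fun t => by rw [hc3]; simp [hc t]
  set β : Fin h → ZMod 3 := fun k => W (iot k) with hβ
  have hβne : β ≠ 0 := by
    intro h0
    have h1 := congrFun h0 ⟨0, hpos⟩
    rw [hβ] at h1
    simp only [Pi.zero_apply] at h1
    rw [show (iot (⟨0, hpos⟩ : Fin h) : ZMod n) = ((1 : ℕ) : ZMod n) from rfl] at h1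
    rw [map_natCast] at h1
    norm_num at h1
  have hS0 : ∀ k : Fin h, ∑ t : ZMod n, c3 (iot k - t) * W t = 0 := by
    intro k
    have ha : ∑ t : ZMod n, c3 (iot k - t) * W t = ∑ u : ZMod n, c3 u * W (iot k - u) := by
      apply Fintype.sum_equiv (Equiv.subLeft (iot k))
      intro t
      simp only [Equiv.subLeft_apply]
      rw [show ((iot k : ZMod n) - (iot k - t)) = t by ring]
    rw [ha]
    have hb : ∀ u : ZMod n, c3 u * W (iot k - u) = c3 u * W (iot k) - c3 u * W u := by
      intro u
      rw [map_sub]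
      ring
    rw [Finset.sum_congr rfl fun u _ => hb u, Finset.sum_sub_distrib, ← Finset.sum_mul]
    have hsc3 : ∑ u : ZMod n, c3 u = 0 := by
      rw [hc3]
      rw [show (∑ u : ZMod n, ((c u : ℤ) : ZMod 3)) = (((∑ u : ZMod n, c u : ℤ)) : ZMod 3) by
        push_cast; rfl]
      exact (ZMod.intCast_zmod_eq_zero_iff_dvd _ 3).mpr hγ
    have hodd : ∑ u : ZMod n, c3 u * W u = 0 := by
      rw [sum_partition hn2 (fun u => c3 u * W u)]
      rw [map_zero, mul_zero, zero_add, ← Finset.sum_add_distrib]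
      apply Finset.sum_eq_zero
      intro k' _
      rw [hc3sym, map_neg]
      ring
    rw [hsc3, hodd, zero_mul, sub_zero]
  have hβ0 : (Cm (h := h) c).map (Int.cast : ℤ → ZMod 3) *ᵥ β = 0 := by
    funext k
    simp only [Matrix.mulVec, dotProduct, Matrix.map_apply, Pi.zero_apply]
    have expand : ∀ j : Fin h, (((Cm (h := h) c) k j : ℤ) : ZMod 3)
        = c3 (iot k - iot j) - c3 (iot k + iot j) := by
      intro j
      rw [Cm, of_apply]
      push_cast
      rfl
    rw [Finset.sum_congr rfl fun j _ => by rw [expand j]]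
    have hpart := sum_partition hn2 (fun t => c3 (iot k - t) * W t)
    rw [hS0 k] at hpart
    rw [show (c3 (iot k - 0) * W 0 : ZMod 3) = 0 by rw [map_zero, mul_zero]] at hpart
    rw [zero_add] at hpart
    have hflip : ∑ j : Fin h, c3 (iot k - -iot j) * W (-iot j)
        = -∑ j : Fin h, c3 (iot k + iot j) * W (iot j) := by
      rw [← Finset.sum_neg_distrib]
      apply Finset.sum_congr rfl
      intro j _
      rw [sub_neg_eq_add, map_neg]
      ring
    rw [hflip] at hpart
    have : ∑ j : Fin h, (c3 (iot k - iot j) - c3 (iot k + iot j)) * β j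
        = ∑ j : Fin h, c3 (iot k - iot j) * W (iot j)
          + -∑ j : Fin h, c3 (iot k + iot j) * W (iot j) := by
      rw [← Finset.sum_neg_distrib, ← Finset.sum_add_distrib]
      apply Finset.sum_congr rfl
      intro j _
      rw [hβ]
      ring
    rw [this, ← hpart]
  have hdet0 : ((Cm (h := h) c).map (Int.cast : ℤ → ZMod 3)).det = 0 :=
    Matrix.exists_mulVec_eq_zero_iff.mp ⟨β, hβne, hβ0⟩
  have hfin : (((Cm (h := h) c).det : ℤ) : ZMod 3) = 0 := by
    rw [show (((Cm (h := h) c).det : ℤ) : ZMod 3)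
      = ((Cm (h := h) c).map (Int.cast : ℤ → ZMod 3)).det from
        RingHom.map_det (Int.castRingHom (ZMod 3)) _]
    exact hdet0
  have hfin2 := (ZMod.intCast_zmod_eq_zero_iff_dvd ((Cm (h := h) c).det) 3).mp hfin
  exact_mod_cast hfin2

end modthree

section lowerbound

variable {n h : ℕ} [NeZero n] (hn2 : n = 2 * h + 1)
include hn2

theorem lower_bound (h3n : 3 ∣ n) (x : DihedralGroup n → ℤ) (d : ℤ) (hd2 : 2 ≤ d)
    (hx : |(Matrix.of fun i j : DihedralGroup n => x (i * j⁻¹)).det| = d) : 4 ≤ d := by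
  have habs : |(Matrix.of fun i j : DihedralGroup n => x (i * j⁻¹)).det|
      = |(∑ t, cv x t) * ((Cm (h := h) (cv x)).det) ^ 2| := by
    rw [abs_det_eq, det_circulant_factor hn2 _ (cv_symm x)]
  set γ1 : ℤ := ∑ t, cv x t with hγ1
  set s : ℤ := (Cm (h := h) (cv x)).det with hs
  rw [habs] at hx
  by_contra hlt
  push_neg at hlt
  have hne : γ1 * s ^ 2 ≠ 0 := by
    intro h0
    rw [h0] at hx
    simp at hx
    omega
  have hd23 : d = 2 ∨ d = 3 := by omega
  have hdvd : d ∣ γ1 * s ^ 2 := by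
    rcases abs_eq (by omega : (0:ℤ) ≤ d) |>.mp hx with h1 | h1
    · exact ⟨1, by omega⟩
    · exact ⟨-1, by omega⟩
  rcases hd23 with rfl | rfl
  · -- d = 2 : show 4 ∣ γ1 * s^2, contradiction
    have h4 : (4 : ℤ) ∣ γ1 * s ^ 2 := by
      rcases (Int.prime_two.dvd_mul).mp hdvd with hg | hsd
      · -- 2 ∣ γ1
        have hABfact : γ1 = ((∑ t, av x t) - ∑ t, bv x t) * ((∑ t, av x t) + ∑ t, bv x t) := by
          rw [hγ1, sum_cv]
          ring
        rw [hABfact] at hg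
        have hboth : (2:ℤ) ∣ ((∑ t, av x t) - ∑ t, bv x t)
            ∧ (2:ℤ) ∣ ((∑ t, av x t) + ∑ t, bv x t) := by
          rcases (Int.prime_two.dvd_mul).mp hg with h1 | h1
          · exact ⟨h1, by obtain ⟨c', hc'⟩ := h1; exact ⟨c' + ∑ t, bv x t, by linarith⟩⟩
          · exact ⟨by obtain ⟨c', hc'⟩ := h1; exact ⟨c' - ∑ t, bv x t, by linarith⟩, h1⟩
        have : (4:ℤ) ∣ γ1 := by
          rw [hABfact]
          exact mul_dvd_mul hboth.1 hboth.2
        exact this.mul_right _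
      · -- 2 ∣ s^2
        have h2s : (2:ℤ) ∣ s := Int.prime_two.dvd_of_dvd_pow hsd
        have : (4:ℤ) ∣ s ^ 2 := by
          obtain ⟨c', hc'⟩ := h2s
          exact ⟨c' ^ 2, by rw [hc']; ring⟩
        exact this.mul_left _
    have hge : (4:ℤ) ≤ |γ1 * s ^ 2| := Int.le_of_dvd (abs_pos.mpr hne) ((dvd_abs _ _).mpr h4)
    omega
  · -- d = 3 : show 9 ∣ γ1 * s^2, contradiction
    have h3s : (3 : ℤ) ∣ s := by
      rcases (Int.prime_three.dvd_mul).mp hdvd with hg | hsd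
      · exact hs ▸ three_dvd_s hn2 h3n (cv x) (cv_symm x) hg
      · exact Int.prime_three.dvd_of_dvd_pow hsd
    have h9 : (9 : ℤ) ∣ γ1 * s ^ 2 := by
      obtain ⟨c', hc'⟩ := h3s
      exact Dvd.dvd.mul_left ⟨c' ^ 2, by rw [hc']; ring⟩ _
    have hge : (9:ℤ) ≤ |γ1 * s ^ 2| := Int.le_of_dvd (abs_pos.mpr hne) ((dvd_abs _ _).mpr h9)
    omega

end lowerbound

section witness

/-- witness element: indicator of `{r 0, r 1}`. -/
def x1 {n : ℕ} : DihedralGroup n → ℤ := fun g =>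
  match g with
  | .r i => (if i = 0 then 1 else 0) + (if i = 1 then 1 else 0)
  | .sr _ => 0

variable {n h : ℕ} [NeZero n] (hn2 : n = 2 * h + 1) (hh1 : 0 < h)
include hn2 hh1

theorem z10 : (1 : ZMod n) ≠ 0 := by
  intro hc
  have : ((1 : ℕ) : ZMod n) = 0 := by exact_mod_cast hc
  rw [ZMod.natCast_eq_zero_iff] at this
  have := Nat.le_of_dvd (by omega) this
  omega

theorem zm10 : (-1 : ZMod n) ≠ 0 := by
  intro hc
  exact z10 hn2 hh1 (by rw [← neg_neg (1 : ZMod n), hc, neg_zero])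

theorem zm11 : (-1 : ZMod n) ≠ 1 := by
  intro hc
  have h2 : ((2 : ℕ) : ZMod n) = 0 := by
    push_cast
    linear_combination -hc
  rw [ZMod.natCast_eq_zero_iff] at h2
  have := Nat.le_of_dvd (by omega) h2
  omega

theorem sum_av_x1 : ∑ t : ZMod n, av (x1 (n := n)) t = 2 := by
  show ∑ t : ZMod n, ((if t = 0 then (1:ℤ) else 0) + (if t = 1 then 1 else 0)) = 2
  rw [Finset.sum_add_distrib, Finset.sum_ite_eq' Finset.univ (0 : ZMod n) (fun _ => (1:ℤ)),
    Finset.sum_ite_eq' Finset.univ (1 : ZMod n) (fun _ => (1:ℤ))]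
  simp

theorem sum_bv_x1 : ∑ t : ZMod n, bv (x1 (n := n)) t = 0 := by
  apply Finset.sum_eq_zero
  intro t _
  rfl

theorem sum_cv_x1 : ∑ t : ZMod n, cv (x1 (n := n)) t = 4 := by
  rw [sum_cv, sum_av_x1 hn2 hh1, sum_bv_x1 hn2 hh1]
  norm_num

theorem cv_x1 (k : ZMod n) :
    cv (x1 (n := n)) k = (if k = 0 then 2 else 0) + (if k = 1 then 1 else 0)
      + (if k = -1 then 1 else 0) := by
  have hsb : sconv (bv (x1 (n := n))) k = 0 := by
    apply Finset.sum_eq_zero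
    intro u _
    show bv (x1 (n := n)) (u - k) * 0 = 0
    ring
  have hsa : sconv (av (x1 (n := n))) k = av (x1 (n := n)) (-k) + av (x1 (n := n)) (1 - k) := by
    unfold sconv
    have expand : ∀ u : ZMod n, av (x1 (n := n)) (u - k) * av (x1 (n := n)) u
        = (if u = 0 then av (x1 (n := n)) (u - k) else 0)
          + (if u = 1 then av (x1 (n := n)) (u - k) else 0) := by
      intro u
      show av (x1 (n := n)) (u - k) * ((if u = 0 then (1:ℤ) else 0) + (if u = 1 then 1 else 0)) = _
      rw [mul_add, mul_ite, mul_one, mul_zero, mul_ite, mul_one, mul_zero]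
    rw [Finset.sum_congr rfl fun u _ => expand u, Finset.sum_add_distrib,
      Finset.sum_ite_eq' Finset.univ (0 : ZMod n) (fun u => av (x1 (n := n)) (u - k)),
      Finset.sum_ite_eq' Finset.univ (1 : ZMod n) (fun u => av (x1 (n := n)) (u - k))]
    simp [zero_sub]
  have : cv (x1 (n := n)) k = av (x1 (n := n)) (-k) + av (x1 (n := n)) (1 - k) := by
    unfold cv
    rw [hsa, hsb, sub_zero]
  rw [this]
  show ((if (-k : ZMod n) = 0 then (1:ℤ) else 0) + (if (-k : ZMod n) = 1 then 1 else 0))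
    + ((if (1 - k : ZMod n) = 0 then (1:ℤ) else 0) + (if (1 - k : ZMod n) = 1 then 1 else 0)) = _
  have c1 : ((-k : ZMod n) = 0) = (k = 0) := by rw [neg_eq_zero]
  have c2 : ((-k : ZMod n) = 1) = (k = -1) := propext neg_eq_iff_eq_neg
  have c3 : ((1 - k : ZMod n) = 0) = (k = 1) := by rw [sub_eq_zero]; exact propext eq_comm
  have c4 : ((1 - k : ZMod n) = 1) = (k = 0) := propext sub_eq_self
  simp only [c1, c2, c3, c4]
  by_cases h0 : k = 0
  · subst h0
    have f1 : ¬((0 : ZMod n) = 1) := fun hc => z10 hn2 hh1 hc.symm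
    have f2 : ¬((0 : ZMod n) = -1) := fun hc => zm10 hn2 hh1 hc.symm
    simp [f1, f2]
  · by_cases h1 : k = 1
    · subst h1
      have f1 : ¬((1 : ZMod n) = 0) := z10 hn2 hh1
      have f2 : ¬((1 : ZMod n) = -1) := fun hc => zm11 hn2 hh1 hc.symm
      simp [f1, f2]
    · by_cases hm : k = -1
      · subst hm
        simp [zm10 hn2 hh1, zm11 hn2 hh1]
      · simp [h0, h1, hm]

end witness

section iotfacts

variable {n h : ℕ} [NeZero n] (hn2 : n = 2 * h + 1)
include hn2

theorem f1 (k j : Fin h) : ((iot k - iot j : ZMod n) = 0) ↔ (k = j) := by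
  rw [sub_eq_zero]
  exact ⟨fun hkj => iot_inj hn2 hkj, fun hkj => by rw [hkj]⟩

theorem f2 (k j : Fin h) : ((iot k - iot j : ZMod n) = 1) ↔ ((k : ℕ) = (j : ℕ) + 1) := by
  constructor
  · intro hkj
    rw [sub_eq_iff_eq_add] at hkj
    have hcast : (((k : ℕ) + 1 : ℕ) : ZMod n) = (((j : ℕ) + 2 : ℕ) : ZMod n) := by
      rw [show ((((j : ℕ) + 2 : ℕ)) : ZMod n) = 1 + iot j by push_cast [iot]; ring]
      exact hkj
    have hk1 := k.is_lt
    have hj1 := j.is_lt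
    have := natCast_inj_of_lt (n := n) (by omega) (by omega) hcast
    omega
  · intro hkj
    rw [sub_eq_iff_eq_add]
    rw [show ((iot k : ZMod n)) = (((k : ℕ) + 1 : ℕ) : ZMod n) from rfl, hkj]
    push_cast [iot]
    ring

theorem f3 (k j : Fin h) : ((iot k - iot j : ZMod n) = -1) ↔ ((j : ℕ) = (k : ℕ) + 1) := by
  rw [show ((iot k - iot j : ZMod n) = -1) ↔ ((iot j - iot k : ZMod n) = 1) by
    constructor <;> intro hkj <;> linear_combination -hkj]
  exact f2 hn2 j k

theorem f4 (k j : Fin h) : ¬((iot k + iot j : ZMod n) = 0) := by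
  intro hkj
  exact iot_ne_neg hn2 k j (eq_neg_of_add_eq_zero_left hkj)

theorem f5 (k j : Fin h) : ¬((iot k + iot j : ZMod n) = 1) := by
  intro hkj
  have hcast : ((((k : ℕ) + (j : ℕ) + 2 : ℕ)) : ZMod n) = (((1 : ℕ)) : ZMod n) := by
    push_cast [iot] at hkj ⊢
    linear_combination hkj
  have hk1 := k.is_lt
  have hj1 := j.is_lt
  have := natCast_inj_of_lt (n := n) (by omega) (by omega) hcast
  omega

theorem f6 (k j : Fin h) :
    ((iot k + iot j : ZMod n) = -1) ↔ ((k : ℕ) + 1 = h ∧ (j : ℕ) + 1 = h) := by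
  have hk1 := k.is_lt
  have hj1 := j.is_lt
  constructor
  · intro hkj
    have hz : ((((k : ℕ) + (j : ℕ) + 3 : ℕ)) : ZMod n) = 0 := by
      push_cast [iot] at hkj ⊢
      linear_combination hkj
    rw [ZMod.natCast_eq_zero_iff] at hz
    have hle := Nat.le_of_dvd (by omega) hz
    obtain ⟨c', hc'⟩ := hz
    rcases c' with _ | c' <;> [omega; skip]
    rcases c' with _ | c' <;> omega
  · rintro ⟨hk, hj⟩
    have hz : ((((k : ℕ) + (j : ℕ) + 3 : ℕ)) : ZMod n) = 0 := by
      rw [show ((k : ℕ) + (j : ℕ) + 3 : ℕ) = n by omega]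
      exact ZMod.natCast_self n
    push_cast [iot] at hz ⊢
    linear_combination hz

end iotfacts

section witnessdet

variable {n h : ℕ} [NeZero n] (hn2 : n = 2 * h + 1) (hh1 : 0 < h)

/-- upper bidiagonal matrix with unit diagonal. -/
def Vb (h : ℕ) : Matrix (Fin h) (Fin h) ℤ :=
  of fun k j => (if k = j then 1 else 0) + (if (j : ℕ) = (k : ℕ) + 1 then 1 else 0)

theorem VV_apply (k j : Fin h) :
    (Vb h * (Vb h)ᵀ) k j = (if k = j then 1 else 0)
      + ((if (k : ℕ) = (j : ℕ) + 1 then 1 else 0) + (if (j : ℕ) = (k : ℕ) + 1 then 1 else 0))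
      + (if k = j ∧ (k : ℕ) + 1 < h then 1 else 0) := by
  rw [mul_apply]
  have expand : ∀ i : Fin h, Vb h k i * (Vb h)ᵀ i j
      = ((if k = i then (1:ℤ) else 0) * (if j = i then 1 else 0)
          + (if k = i then (1:ℤ) else 0) * (if (i : ℕ) = (j : ℕ) + 1 then 1 else 0))
        + ((if (i : ℕ) = (k : ℕ) + 1 then (1:ℤ) else 0) * (if j = i then 1 else 0)
          + (if (i : ℕ) = (k : ℕ) + 1 then (1:ℤ) else 0)
            * (if (i : ℕ) = (j : ℕ) + 1 then 1 else 0)) := by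
    intro i
    show ((if k = i then (1:ℤ) else 0) + (if (i : ℕ) = (k : ℕ) + 1 then 1 else 0))
      * ((if j = i then (1:ℤ) else 0) + (if (i : ℕ) = (j : ℕ) + 1 then 1 else 0)) = _
    ring
  rw [Finset.sum_congr rfl fun i _ => expand i, Finset.sum_add_distrib, Finset.sum_add_distrib,
    Finset.sum_add_distrib]
  have T1 : ∑ i : Fin h, (if k = i then (1:ℤ) else 0) * (if j = i then 1 else 0)
      = if k = j then 1 else 0 := by
    simp only [ite_mul, one_mul, zero_mul]
    rw [Finset.sum_ite_eq Finset.univ k (fun i => (if j = i then (1:ℤ) else 0))]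
    simp only [Finset.mem_univ, if_true]
    by_cases hkj : k = j
    · subst hkj; simp
    · rw [if_neg (fun hc => hkj hc.symm), if_neg hkj]
  have T2 : ∑ i : Fin h, (if k = i then (1:ℤ) else 0) * (if (i : ℕ) = (j : ℕ) + 1 then 1 else 0)
      = if (k : ℕ) = (j : ℕ) + 1 then 1 else 0 := by
    simp only [ite_mul, one_mul, zero_mul]
    rw [Finset.sum_ite_eq Finset.univ k (fun i => (if (i : ℕ) = (j : ℕ) + 1 then (1:ℤ) else 0))]
    simp
  have T3 : ∑ i : Fin h, (if (i : ℕ) = (k : ℕ) + 1 then (1:ℤ) else 0) * (if j = i then 1 else 0)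
      = if (j : ℕ) = (k : ℕ) + 1 then 1 else 0 := by
    have : ∀ i : Fin h, (if (i : ℕ) = (k : ℕ) + 1 then (1:ℤ) else 0) * (if j = i then 1 else 0)
        = if j = i then (if (i : ℕ) = (k : ℕ) + 1 then (1:ℤ) else 0) else 0 := by
      intro i
      by_cases hji : j = i <;> simp [hji]
    rw [Finset.sum_congr rfl fun i _ => this i,
      Finset.sum_ite_eq Finset.univ j (fun i => (if (i : ℕ) = (k : ℕ) + 1 then (1:ℤ) else 0))]
    simp
  have T4 : ∑ i : Fin h, (if (i : ℕ) = (k : ℕ) + 1 then (1:ℤ) else 0)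
        * (if (i : ℕ) = (j : ℕ) + 1 then 1 else 0)
      = if k = j ∧ (k : ℕ) + 1 < h then 1 else 0 := by
    by_cases hkh : (k : ℕ) + 1 < h
    · rw [Finset.sum_eq_single (⟨(k : ℕ) + 1, hkh⟩ : Fin h)]
      · simp only [Fin.ext_iff, Fin.val_mk]
        split_ifs <;> omega
      · intro i _ hi
        have hne : ¬((i : ℕ) = (k : ℕ) + 1) := fun hc => hi (Fin.ext (by simpa using hc))
        rw [if_neg hne, zero_mul]
      · intro hmem
        exact absurd (Finset.mem_univ _) hmem
    · rw [Finset.sum_eq_zero, if_neg (show ¬(k = j ∧ (k : ℕ) + 1 < h) from fun hc => hkh hc.2)]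
      intro i _
      have hne : ¬((i : ℕ) = (k : ℕ) + 1) := by
        have := i.is_lt
        omega
      rw [if_neg hne, zero_mul]
  rw [T1, T2, T3, T4]
  ring

include hn2 hh1

theorem Cm_x1 : Cm (h := h) (cv (x1 (n := n))) = Vb h * (Vb h)ᵀ := by
  ext k j
  rw [VV_apply, Cm, of_apply, cv_x1 hn2 hh1, cv_x1 hn2 hh1]
  have hk1 := k.is_lt
  have hj1 := j.is_lt
  simp only [f1 hn2 k j, f2 hn2 k j, f3 hn2 k j, eq_false (f4 hn2 k j), eq_false (f5 hn2 k j),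
    f6 hn2 k j, if_false]
  simp only [Fin.ext_iff]
  split_ifs <;> omega

theorem det_Vb : (Vb h).det = 1 := by
  have htri : (Vb h).BlockTriangular id := by
    intro i j hij
    simp only [id_eq] at hij
    rw [Vb, of_apply, if_neg (fun hc : i = j => by subst hc; exact lt_irrefl _ hij),
      if_neg (by omega : ¬((j : ℕ) = (i : ℕ) + 1))]
    ring
  rw [Matrix.det_of_upperTriangular htri]
  apply Finset.prod_eq_one
  intro i _
  rw [Vb, of_apply, if_pos rfl, if_neg (by omega : ¬((i : ℕ) = (i : ℕ) + 1))]
  ring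

theorem witness_det :
    |(Matrix.of fun i j : DihedralGroup n => (x1 (n := n)) (i * j⁻¹)).det| = 4 := by
  rw [abs_det_eq (x1 (n := n))]
  have hsym := cv_symm (x1 : DihedralGroup n → ℤ)
  have hfac := det_circulant_factor (h := h) hn2 (cv (x1 : DihedralGroup n → ℤ)) hsym
  rw [hfac]
  rw [sum_cv_x1 hn2 hh1, Cm_x1 hn2 hh1, det_mul, det_transpose, det_Vb hn2 hh1]
  norm_num

end witnessdet

end Stmt11

/-- `λ(D_{2n}) = 4` when `n = 3m` with `m` odd. -/
theorem stmt11 (n m : ℕ) [NeZero n] (hn : n = 3 * m) (hm : Odd m) :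
    IsLeast {d : ℤ | 2 ≤ d ∧ ∃ x : DihedralGroup n → ℤ,
      |Matrix.det (Matrix.of fun i j : DihedralGroup n => x (i * j⁻¹))| = d} 4 := by
  obtain ⟨mm, hmm⟩ := hm
  have hn2 : n = 2 * (3 * mm + 1) + 1 := by omega
  have hh1 : 0 < 3 * mm + 1 := by omega
  have h3n : 3 ∣ n := ⟨m, hn⟩
  constructor
  · refine ⟨by norm_num, Stmt11.x1, ?_⟩
    exact Stmt11.witness_det hn2 hh1
  · rintro d ⟨hd2, x, hx⟩
    exact Stmt11.lower_bound hn2 h3n x d hd2 hx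
end

section
/- The set of values of the integer group determinant of G = ℤ/2 × ℤ/2 is exactly {4m+1 : m ∈ ℤ} ∪ {16(2m+1) : m ∈ ℤ} ∪ {64m : m ∈ ℤ}. -/
private def e4 : Fin 4 ≃ ZMod 2 × ZMod 2 where
  toFun := ![(0,0),(1,0),(0,1),(1,1)]
  invFun p := ⟨p.1.val + 2*p.2.val, by have := ZMod.val_lt p.1; have := ZMod.val_lt p.2; omega⟩
  left_inv := by decide
  right_inv := by decide

private lemma det_formula (x : ZMod 2 × ZMod 2 → ℤ) :
    Matrix.det (Matrix.of fun i j : ZMod 2 × ZMod 2 => x (i - j)) =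
    (x (0,0) + x (1,0) + x (0,1) + x (1,1)) * (x (0,0) + x (1,0) - x (0,1) - x (1,1)) *
    (x (0,0) - x (1,0) + x (0,1) - x (1,1)) * (x (0,0) - x (1,0) - x (0,1) + x (1,1)) := by
  rw [← Matrix.det_submatrix_equiv_self e4]
  have hM : (Matrix.of fun i j : ZMod 2 × ZMod 2 => x (i - j)).submatrix e4 e4 =
      !![x (0,0), x (1,0), x (0,1), x (1,1);
         x (1,0), x (0,0), x (1,1), x (0,1);
         x (0,1), x (1,1), x (0,0), x (1,0);
         x (1,1), x (0,1), x (1,0), x (0,0)] := by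
    ext i j
    fin_cases i <;> fin_cases j <;> rfl
  rw [hM]
  simp [Matrix.det_succ_row_zero, Fin.sum_univ_succ, Fin.succAbove]
  ring

private lemma odd_zmod4 : ∀ a b c e k : ZMod 4, a+b+c+e = 2*k+1 →
    (a+b+c+e)*(a+b-c-e)*(a-b+c-e)*(a-b-c+e) = 1 := by decide

private lemma even_zmod4 : ∀ α β γ δ s : ZMod 4, α+β+γ+δ = 2*s → α*β*γ*δ ≠ 2 := by decide

/-- The set of integer group determinant values of `ℤ/2 × ℤ/2` is exactly
`{4m+1} ∪ {16(2m+1)} ∪ {64m}`. -/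
theorem stmt14 :
    {d : ℤ | ∃ x : ZMod 2 × ZMod 2 → ℤ,
        Matrix.det (Matrix.of fun i j : ZMod 2 × ZMod 2 => x (i - j)) = d} =
      {d : ℤ | ∃ m : ℤ, d = 4 * m + 1} ∪
        {d : ℤ | ∃ m : ℤ, d = 16 * (2 * m + 1)} ∪
        {d : ℤ | ∃ m : ℤ, d = 64 * m} := by
  ext d
  simp only [Set.mem_setOf_eq, Set.mem_union]
  constructor
  · rintro ⟨x, hx⟩
    rw [det_formula] at hx
    set a := x (0,0); set b := x (1,0); set c := x (0,1); set e := x (1,1)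
    rcases Int.even_or_odd (a+b+c+e) with he | ho
    · -- even case
      obtain ⟨r, hr⟩ := he
      have he' : e = 2*r - a - b - c := by omega
      set Q : ℤ := r*(a+b-r)*(a+c-r)*(r-b-c) with hQ
      have hP : d = 16 * Q := by rw [← hx, he', hQ]; ring
      rcases Int.even_or_odd Q with hQe | ⟨m, hm⟩
      · refine Or.inr ?_
        -- show 4 ∣ Q
        have h4 : (4 : ℤ) ∣ Q := by
          by_contra h4
          obtain ⟨t, ht⟩ := hQe
          have hmod : Q % 4 = 2 := by omega
          obtain ⟨j, hj⟩ : ∃ j, Q = 4*j+2 := ⟨Q/4, by omega⟩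
          have : ((Q : ZMod 4)) = 2 := by
            rw [hj]; push_cast; rw [show (4:ZMod 4) = 0 from rfl]; ring
          refine even_zmod4 (r) ((a:ZMod 4)+b-r) ((a:ZMod 4)+c-r) ((r:ZMod 4)-b-c) a ?_ ?_
          · ring
          · rw [← this, hQ]; push_cast; ring
        obtain ⟨m, hm⟩ := h4
        exact ⟨m, by omega⟩
      · refine Or.inl (Or.inr ?_)
        exact ⟨m, by omega⟩
    · -- odd case
      refine Or.inl (Or.inl ?_)
      obtain ⟨k, hk⟩ := ho
      have h1 : ((d : ZMod 4)) = 1 := by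
        have hsum : ((a:ZMod 4))+b+c+e = 2*(k:ZMod 4)+1 := by
          have h := congrArg (fun n : ℤ => (n : ZMod 4)) hk
          push_cast at h
          linear_combination h
        rw [← hx]; push_cast
        exact odd_zmod4 a b c e k hsum
      have : (4:ℤ) ∣ d - 1 := by
        have := (ZMod.intCast_zmod_eq_zero_iff_dvd (d-1) 4).mp (by push_cast; rw [h1]; ring)
        exact_mod_cast this
      obtain ⟨m, hm⟩ := this
      exact ⟨m, by omega⟩
  · rintro ((⟨m, rfl⟩ | ⟨m, rfl⟩) | ⟨m, rfl⟩)
    · refine ⟨fun p => if p = (0,0) then m+1 else m, ?_⟩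
      rw [det_formula fun p => if p = (0,0) then m+1 else m]
      show ((m+1)+m+m+m) * ((m+1)+m-m-m) * ((m+1)-m+m-m) * ((m+1)-m-m+m) = 4*m+1
      ring
    · refine ⟨fun p => if p = (0,0) then m+2 else if p = (1,1) then m else -m, ?_⟩
      rw [det_formula fun p => if p = (0,0) then m+2 else if p = (1,1) then m else -m]
      show ((m+2)+(-m)+(-m)+m) * ((m+2)+(-m)-(-m)-m) * ((m+2)-(-m)+(-m)-m) * ((m+2)-(-m)-(-m)+m)
        = 16*(2*m+1)
      ring
    · refine ⟨fun p => if p = (0,0) then m+2 else if p = (1,0) then -m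
        else if p = (0,1) then 1-m else m-1, ?_⟩
      rw [det_formula fun p => if p = (0,0) then m+2 else if p = (1,0) then -m
        else if p = (0,1) then 1-m else m-1]
      show ((m+2)+(-m)+(1-m)+(m-1)) * ((m+2)+(-m)-(1-m)-(m-1)) * ((m+2)-(-m)+(1-m)-(m-1))
        * ((m+2)-(-m)-(1-m)+(m-1)) = 64*m
      ring
end

section
/- Let α ≥ 1 and let n be a positive integer with 2^α exactly dividing n. Then |Res(x^{2^α} + 1, x^n - 1)| = 2^{2^α}. -/
open Finset Polynomial

private lemma prod_range_sub_pow {m : ℕ} (hm : 0 < m) {ω : ℂ} (hω : IsPrimitiveRoot ω m)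
    (x : ℂ) : ∏ j ∈ Finset.range m, (x - ω ^ j) = x ^ m - 1 := by
  haveI : NeZero m := ⟨hm.ne'⟩
  have h := Polynomial.X_pow_sub_one_eq_prod hm hω
  have := congrArg (Polynomial.eval x) h
  simp only [Polynomial.eval_sub, Polynomial.eval_pow, Polynomial.eval_X, Polynomial.eval_one,
    Polynomial.eval_prod, Polynomial.eval_C] at this
  rw [this]
  have hset : Polynomial.nthRootsFinset m (1 : ℂ) = (Finset.range m).image (ω ^ ·) := by
    apply Finset.eq_of_subset_of_card_le
    · intro x hx
      rw [Polynomial.mem_nthRootsFinset hm] at hx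
      obtain ⟨i, hi, rfl⟩ := hω.eq_pow_of_pow_eq_one hx
      exact Finset.mem_image.2 ⟨i, Finset.mem_range.2 hi, rfl⟩
    · rw [hω.card_nthRootsFinset]
      exact Finset.card_image_le.trans (by simp)
  rw [hset, Finset.prod_image]
  intro a ha b hb hab
  exact hω.pow_inj (Finset.mem_range.1 ha) (Finset.mem_range.1 hb) hab

private lemma prod_one_add_pow {m : ℕ} (hm : 0 < m) (hodd : Odd m) {ω : ℂ}
    (hω : IsPrimitiveRoot ω m) : ∏ j ∈ Finset.range m, (ω ^ j + 1) = 2 := by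
  have key := prod_range_sub_pow hm hω (-1)
  rw [hodd.neg_one_pow] at key
  calc ∏ j ∈ Finset.range m, (ω ^ j + 1)
      = ∏ j ∈ Finset.range m, (-1 : ℂ) * ((-1) - ω ^ j) := by
        apply Finset.prod_congr rfl; intro j _; ring
    _ = (-1) ^ m * ∏ j ∈ Finset.range m, ((-1 : ℂ) - ω ^ j) := by
        rw [Finset.prod_mul_distrib, Finset.prod_const, Finset.card_range]
    _ = 2 := by rw [key, hodd.neg_one_pow]; ring

private lemma shift_periodic {f : ℕ → ℂ} {m : ℕ} (hf : ∀ j, f (j + m) = f j) (q j : ℕ) :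
    f (q * m + j) = f j := by
  induction q with
  | zero => simp
  | succ q ih2 => rw [Nat.succ_mul, add_right_comm, hf, ih2]

private lemma prod_periodic {f : ℕ → ℂ} {m : ℕ} (hf : ∀ j, f (j + m) = f j) (q : ℕ) :
    ∏ j ∈ Finset.range (q * m), f j = (∏ j ∈ Finset.range m, f j) ^ q := by
  induction q with
  | zero => simp
  | succ q ih =>
    rw [Nat.succ_mul, Finset.prod_range_add, ih, pow_succ]
    congr 1
    exact Finset.prod_congr rfl fun j _ => shift_periodic hf q j

/-- For `α ≥ 1` and `2^α ∥ n`, `|Res(x^{2^α} + 1, x^n - 1)| = 2^{2^α}`. Since `x^n - 1`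
is monic with roots the `n`-th roots of unity, the resultant is (up to sign) the product
of `x^{2^α} + 1` over all `n`-th roots of unity. -/
theorem stmt18 (α n : ℕ) (hα : 1 ≤ α) (hdvd : 2 ^ α ∣ n) (hndvd : ¬ 2 ^ (α + 1) ∣ n)
    (hpos : 0 < n) :
    ‖(∏ j ∈ Finset.range n,
        (((Complex.exp (2 * Real.pi * Complex.I / n)) ^ j) ^ (2 ^ α) + 1))‖ =
      (2 : ℝ) ^ (2 ^ α) := by
  obtain ⟨m, hnm⟩ := hdvd
  have hm : 0 < m := Nat.pos_of_ne_zero (by rintro rfl; simp [hnm] at hpos)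
  have hmodd : Odd m := by
    rcases Nat.even_or_odd m with he | ho
    · obtain ⟨k, hk⟩ := he
      exact absurd ⟨k, by rw [hnm, hk]; ring⟩ hndvd
    · exact ho
  set ζ := Complex.exp (2 * Real.pi * Complex.I / n)
  set ω := Complex.exp (2 * Real.pi * Complex.I / m)
  have hω : IsPrimitiveRoot ω m := Complex.isPrimitiveRoot_exp m hm.ne'
  have hζpow : ζ ^ (2 ^ α) = ω := by
    rw [← Complex.exp_nat_mul]
    congr 1
    have hn0 : (n : ℂ) ≠ 0 := Nat.cast_ne_zero.2 hpos.ne'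
    have hm0 : (m : ℂ) ≠ 0 := Nat.cast_ne_zero.2 hm.ne'
    field_simp
    rw [hnm]
    push_cast
    ring
  have hper : ∀ j, ω ^ (j + m) + 1 = ω ^ j + 1 := by
    intro j
    rw [pow_add, hω.pow_eq_one, mul_one]
  have hprod : ∏ j ∈ Finset.range n, ((ζ ^ j) ^ (2 ^ α) + 1) = (2 : ℂ) ^ (2 ^ α) := by
    have hre : ∀ j, (ζ ^ j) ^ (2 ^ α) + 1 = ω ^ j + 1 := by
      intro j
      rw [← pow_mul, mul_comm, pow_mul, hζpow]
    calc ∏ j ∈ Finset.range n, ((ζ ^ j) ^ (2 ^ α) + 1)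
        = ∏ j ∈ Finset.range (2 ^ α * m), (ω ^ j + 1) := by
          rw [← hnm]; exact Finset.prod_congr rfl fun j _ => hre j
      _ = (∏ j ∈ Finset.range m, (ω ^ j + 1)) ^ (2 ^ α) := prod_periodic hper (2 ^ α)
      _ = (2 : ℂ) ^ (2 ^ α) := by rw [prod_one_add_pow hm hmodd hω]
  rw [hprod, norm_pow]
  norm_num
end

section
/- Let p be an odd prime, ω = e^{2πi/p}, and define f(x) = (x^{(p+1)/2} - 1)/(x-1) + (x-1) and g(x) = (x^{(p-1)/2} - 1)/(x-1) + x^{-1}(x-1). Then ∏_{j=0}^{p-1} (f(ω^j)f(ω^{-j}) - g(ω^j)g(ω^{-j})) = p^3. -/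
lemma key19 (k : ℕ) (ζ : ℂ) (hζ0 : ζ ≠ 0) (hζ1 : ζ ≠ 1)
    (hcyc : ζ ^ (2 * (k + 1)) = ζ) :
    ((∑ i ∈ Finset.range (k + 1), ζ ^ i) + (ζ - 1)) *
      ((∑ i ∈ Finset.range (k + 1), (ζ⁻¹) ^ i) + (ζ⁻¹ - 1)) -
    ((∑ i ∈ Finset.range k, ζ ^ i) + (1 - ζ⁻¹)) *
      ((∑ i ∈ Finset.range k, (ζ⁻¹) ^ i) + (1 - ζ)) = (1 - ζ) ^ 2 * ζ⁻¹ := by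
  have hinv1 : ζ⁻¹ ≠ 1 := by
    intro h
    apply hζ1
    field_simp at h
    exact h.symm
  set s : ℂ := ζ ^ (k + 1) with hs
  clear_value s
  have hsq : s ^ 2 = ζ := by rw [hs, ← pow_mul, mul_comm, hcyc]
  have hs0 : s ≠ 0 := hs ▸ pow_ne_zero _ hζ0
  have hs1 : s - 1 ≠ 0 := by
    intro h
    apply hζ1
    rw [sub_eq_zero] at h
    rw [← hsq, h]; ring
  have hsm1 : s + 1 ≠ 0 := by
    intro h
    apply hζ1
    have h' : s = -1 := by linear_combination h
    rw [← hsq, h']; ring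
  have h2 : s ^ 2 - 1 ≠ 0 := by
    intro h
    have : (s - 1) * (s + 1) = 0 := by linear_combination h
    rcases mul_eq_zero.mp this with h | h
    exacts [hs1 h, hsm1 h]
  have hsk : ζ ^ k = s⁻¹ := by
    have h1 : ζ ^ k * s ^ 2 = s := by rw [hsq, ← pow_succ, hs]
    have h3 : ζ ^ k * s = 1 := by
      apply mul_left_cancel₀ hs0
      linear_combination h1
    field_simp
    linear_combination h3
  have hik : (ζ⁻¹) ^ k = s := by
    rw [inv_pow, hsk, inv_inv]
  have hik1 : (ζ⁻¹) ^ (k + 1) = s⁻¹ := by rw [inv_pow, ← hs]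
  rw [geom_sum_eq hζ1, geom_sum_eq hζ1, geom_sum_eq hinv1, geom_sum_eq hinv1,
    hsk, hik, hik1, ← hs, ← hsq]
  have h3 : 1 - s ^ 2 ≠ 0 := fun h => h2 (by linear_combination -h)
  have h4 : s - s ^ 3 ≠ 0 := fun h => h2 (by
    apply mul_left_cancel₀ hs0; linear_combination -h)
  have hD : s ^ 6 * (1 - s ^ 2) ^ 4 ≠ 0 := mul_ne_zero (pow_ne_zero _ hs0) (pow_ne_zero _ h3)
  field_simp
  ring

/-- For an odd prime `p` and `ω = e^{2πi/p}`, with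
`f(x) = (x^{(p+1)/2} - 1)/(x - 1) + (x - 1) = (∑_{i < (p+1)/2} x^i) + (x - 1)` and
`g(x) = (x^{(p-1)/2} - 1)/(x - 1) + x⁻¹(x - 1) = (∑_{i < (p-1)/2} x^i) + (1 - x⁻¹)`,
the dihedral determinant `∏_{j<p} (f(ω^j) f(ω^{-j}) - g(ω^j) g(ω^{-j}))` equals `p^3`. -/
theorem stmt19 (p : ℕ) (hp : p.Prime) (hodd : Odd p)
    (ω : ℂ) (hω : ω = Complex.exp (2 * Real.pi * Complex.I / p))
    (f g : ℂ → ℂ)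
    (hf : ∀ w : ℂ, f w = (∑ i ∈ Finset.range ((p + 1) / 2), w ^ i) + (w - 1))
    (hg : ∀ w : ℂ, g w = (∑ i ∈ Finset.range ((p - 1) / 2), w ^ i) + (1 - w⁻¹)) :
    (∏ j ∈ Finset.range p,
        (f (ω ^ j) * f ((ω ^ j)⁻¹) - g (ω ^ j) * g ((ω ^ j)⁻¹))) = (p : ℂ) ^ 3 := by
  have hprim : IsPrimitiveRoot ω p := by
    rw [hω]; exact Complex.isPrimitiveRoot_exp p hp.ne_zero
  have hωp : ω ^ p = 1 := hprim.pow_eq_one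
  have hω0 : ω ≠ 0 := hprim.ne_zero hp.ne_zero
  obtain ⟨k, hk⟩ := hodd
  have hm1 : (p + 1) / 2 = k + 1 := by omega
  have hm2 : (p - 1) / 2 = k := by omega
  subst hk
  have hterm : ∀ j ∈ Finset.range (2 * k),
      f (ω ^ (j + 1)) * f ((ω ^ (j + 1))⁻¹) - g (ω ^ (j + 1)) * g ((ω ^ (j + 1))⁻¹)
        = (1 - ω ^ (j + 1)) ^ 2 * (ω ^ (j + 1))⁻¹ := by
    intro j hj
    simp only [Finset.mem_range] at hj
    have hz1 : ω ^ (j + 1) ≠ 1 :=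
      hprim.pow_ne_one_of_pos_of_lt (Nat.succ_ne_zero j) (by omega)
    have hz0 : ω ^ (j + 1) ≠ 0 := pow_ne_zero _ hω0
    have hcyc : (ω ^ (j + 1)) ^ (2 * (k + 1)) = ω ^ (j + 1) := by
      rw [← pow_mul, show (j + 1) * (2 * (k + 1)) = (2 * k + 1) * (j + 1) + (j + 1) by ring,
        pow_add, pow_mul, hωp, one_pow, one_mul]
    rw [hf _, hf _, hg _, hg _, hm1, hm2, inv_inv]
    exact key19 k _ hz0 hz1 hcyc
  rw [Finset.prod_range_succ', Finset.prod_congr rfl hterm]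
  have hF0 : f (ω ^ 0) * f ((ω ^ 0)⁻¹) - g (ω ^ 0) * g ((ω ^ 0)⁻¹)
      = ((k : ℂ) + 1) * ((k : ℂ) + 1) - (k : ℂ) * (k : ℂ) := by
    simp [hf, hg, hm1, hm2]
  have h1 : ∏ j ∈ Finset.range (2 * k), (1 - ω ^ (j + 1)) = ((2 * k : ℕ) : ℂ) + 1 :=
    hprim.prod_one_sub_pow_eq_order
  have h2 : ∏ j ∈ Finset.range (2 * k), (ω ^ (j + 1)) = 1 := by
    rw [Finset.prod_pow_eq_pow_sum]
    have hsum : ∀ n : ℕ, ∑ j ∈ Finset.range (2 * n), (j + 1) = n * (2 * n + 1) := by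
      intro n
      induction n with
      | zero => simp
      | succ m ih =>
        rw [show 2 * (m + 1) = 2 * m + 1 + 1 by ring, Finset.sum_range_succ,
          Finset.sum_range_succ, ih]
        ring
    have hsum := hsum k
    rw [hsum, mul_comm, pow_mul, hωp, one_pow]
  rw [hF0, Finset.prod_mul_distrib, Finset.prod_pow, Finset.prod_inv_distrib, h1, h2]
  push_cast
  ring
end
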